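/- arXiv:2207.00602 — 5 statements merged into one kernel-verified Lean document; each statement's English description precedes it below -/
import Mathlib

section
/- Let α > 0 and let d ≥ 1 be an integer. Suppose (p_x)_{x∈ℕ} is a sequence with p_x ∈ [0,1] for all x, satisfying p₁ = (1+αd)·p₀ and the recursion p_{x+2} = (1+α(x+d+1))·( p_{x+1} − (α(x+1)/(1+α(x+1)))·p_x ) for all x ≥ 0. Then p_x = 0 for all x ∈ ℕ. -/
/-- If `α > 0`, `d ≥ 1` is an integer, and `(p_x)` is a `[0,1]`-valued sequence with
`p₁ = (1+αd)p₀` and satisfying the second-order recursion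
`p_{x+2} = (1+α(x+d+1))·(p_{x+1} − (α(x+1)/(1+α(x+1)))·p_x)` for all `x ≥ 0`,
then `p_x = 0` for all `x`. -/
theorem stmt1 (α : ℝ) (hα : 0 < α) (d : ℕ) (hd : 1 ≤ d) (p : ℕ → ℝ)
    (hp : ∀ x : ℕ, 0 ≤ p x ∧ p x ≤ 1)
    (h1 : p 1 = (1 + α * (d : ℝ)) * p 0)
    (hrec : ∀ x : ℕ, p (x + 2) =
      (1 + α * ((x : ℝ) + (d : ℝ) + 1)) *
        (p (x + 1) - (α * ((x : ℝ) + 1) / (1 + α * ((x : ℝ) + 1))) * p x)) :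
    ∀ x : ℕ, p x = 0 := by
  have hd1 : (1 : ℝ) ≤ (d : ℝ) := by exact_mod_cast hd
  have hαd : 0 < α * (d : ℝ) := by nlinarith
  -- one-step improvement: if ratio bound holds at x, then p(x+2) ≥ (1+αd) p(x+1)
  have stepgen : ∀ n : ℕ,
      (1 + α * (d : ℝ) / (1 + α * ((n : ℝ) + 1))) * p n ≤ p (n + 1) →
      (1 + α * (d : ℝ)) * p (n + 1) ≤ p (n + 2) := by
    intro n ih
    set t : ℝ := α * ((n : ℝ) + 1) with ht_def
    have ht : (0 : ℝ) < 1 + t := by positivity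
    have hpn : 0 ≤ p n := (hp n).1
    have hpn1 : 0 ≤ p (n + 1) := (hp (n + 1)).1
    have key : (1 + t + α * d) * p n ≤ (1 + t) * p (n + 1) := by
      have h2 := mul_le_mul_of_nonneg_left ih (le_of_lt ht)
      calc (1 + t + α * d) * p n = (1 + t) * ((1 + α * d / (1 + t)) * p n) := by
            field_simp

        _ ≤ (1 + t) * p (n + 1) := h2
    have hr := hrec n
    have hB : (1 + α * ((n : ℝ) + (d : ℝ) + 1)) = 1 + t + α * d := by
      rw [ht_def]; ring
    rw [hr, hB, ← ht_def, ← sub_nonneg]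
    have expand : (1 + t + α * ↑d) * (p (n + 1) - t / (1 + t) * p n) -
        (1 + α * ↑d) * p (n + 1)
        = t * ((1 + t) * p (n + 1) - (1 + t + α * ↑d) * p n) / (1 + t) := by
      field_simp
      ring
    rw [expand]
    apply div_nonneg _ (le_of_lt ht)
    have htpos : 0 ≤ t := by positivity
    nlinarith [key]
  -- main growth lemma
  have L : ∀ x : ℕ, (1 + α * (d : ℝ) / (1 + α * ((x : ℝ) + 1))) * p x ≤ p (x + 1) := by
    intro x
    induction x with
    | zero =>
      have h0 : 0 ≤ p 0 := (hp 0).1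
      rw [h1]
      have hden : (0 : ℝ) < 1 + α * ((0 : ℕ) + 1 : ℝ) := by push_cast; nlinarith
      have : α * (d : ℝ) / (1 + α * ((0 : ℕ) + 1 : ℝ)) ≤ α * (d : ℝ) := by
        rw [div_le_iff₀ hden]
        push_cast
        nlinarith
      push_cast at this ⊢
      nlinarith
    | succ n ih =>
      have step := stepgen n ih
      have hpn1 : 0 ≤ p (n + 1) := (hp (n + 1)).1
      have hβ : α * (d : ℝ) / (1 + α * ((↑(n + 1) : ℝ) + 1)) ≤ α * (d : ℝ) := by
        rw [div_le_iff₀ (by push_cast; nlinarith)]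
        push_cast
        nlinarith [mul_nonneg hαd.le (mul_nonneg hα.le (show (0:ℝ) ≤ (n:ℝ)+1+1 by positivity))]
      calc (1 + α * ↑d / (1 + α * ((↑(n + 1) : ℝ) + 1))) * p (n + 1)
          ≤ (1 + α * ↑d) * p (n + 1) := by nlinarith [hβ]
        _ ≤ p (n + 1 + 1) := step
  have step : ∀ n : ℕ, (1 + α * (d : ℝ)) * p (n + 1) ≤ p (n + 2) :=
    fun n => stepgen n (L n)
  -- geometric growth
  have geom : ∀ n : ℕ, (1 + α * (d : ℝ)) ^ n * p 1 ≤ p (n + 1) := by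
    intro n
    induction n with
    | zero => simp
    | succ m ih =>
      calc (1 + α * (d : ℝ)) ^ (m + 1) * p 1
          = (1 + α * (d : ℝ)) * ((1 + α * (d : ℝ)) ^ m * p 1) := by ring
        _ ≤ (1 + α * (d : ℝ)) * p (m + 1) := by nlinarith [ih, hαd]
        _ ≤ p (m + 2) := step m
  -- p 1 = 0
  have hp1 : p 1 = 0 := by
    by_contra h
    have hpos : 0 < p 1 := lt_of_le_of_ne (hp 1).1 (Ne.symm h)
    obtain ⟨n, hn⟩ := pow_unbounded_of_one_lt (1 / p 1) (by nlinarith : (1 : ℝ) < 1 + α * d)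
    have h2 : 1 < (1 + α * (d : ℝ)) ^ n * p 1 := by
      rw [div_lt_iff₀ hpos] at hn
      linarith
    have h3 := geom n
    have h4 := (hp (n + 1)).2
    linarith
  -- p 0 = 0
  have hp0 : p 0 = 0 := by
    have := h1
    rw [hp1] at this
    have h0 : 0 ≤ p 0 := (hp 0).1
    nlinarith
  -- all zero by two-step induction
  have main : ∀ x : ℕ, p x = 0 ∧ p (x + 1) = 0 := by
    intro x
    induction x with
    | zero => exact ⟨hp0, hp1⟩
    | succ n ih =>
      refine ⟨ih.2, ?_⟩
      rw [hrec n, ih.1, ih.2]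
      ring
  exact fun x => (main x).1
end

section
/- Let d ∈ ℤ \ {0} and let (x₀,y₀) ∈ ℕ² with x₀ − y₀ = d. Then the two-point motion of the birth-death chain exits the level set I_d = {(x,y) ∈ ℕ² : x − y = d} ℙ-almost surely in finite time; that is, ℙ({q ∈ Q₊ : φⁿ_q(x₀) − φⁿ_q(y₀) = d for all n ≥ 0}) = 0. -/
open MeasureTheory ProbabilityTheory Filter

/-- The birth-death transition map. -/
noncomputable def bdStep (γ₁ γ₂ : ℝ) (q : ℝ) (x : ℕ) : ℕ :=
  if q < γ₁ / (γ₁ + γ₂ * x) then x + 1 else x - 1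

/-- The cocycle of the embedded birth-death chain. -/
noncomputable def bdCocycle (γ₁ γ₂ : ℝ) (q : ℕ → ℝ) : ℕ → ℕ → ℕ
  | 0, x => x
  | n + 1, x => bdStep γ₁ γ₂ (q n) (bdCocycle γ₁ γ₂ q n x)

open Topology

noncomputable def bdT (γ₁ γ₂ : ℝ) (y : ℕ) : ℝ := γ₁ / (γ₁ + γ₂ * y)

section helpers
variable {γ₁ γ₂ : ℝ} (hγ₁ : 0 < γ₁) (hγ₂ : 0 < γ₂)
include hγ₁ hγ₂

lemma bdT_denom_pos (y : ℕ) : 0 < γ₁ + γ₂ * y := by positivity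

lemma bdT_pos (y : ℕ) : 0 < bdT γ₁ γ₂ y := by
  unfold bdT; positivity

lemma bdT_le_one (y : ℕ) : bdT γ₁ γ₂ y ≤ 1 := by
  rw [bdT, div_le_one (bdT_denom_pos hγ₁ hγ₂ y)]
  nlinarith [Nat.cast_nonneg (α := ℝ) y]

lemma bdT_anti {y z : ℕ} (h : y ≤ z) : bdT γ₁ γ₂ z ≤ bdT γ₁ γ₂ y := by
  unfold bdT
  have h' : (y : ℝ) ≤ z := by exact_mod_cast h
  gcongr

lemma bdT_strictAnti {y z : ℕ} (h : y < z) : bdT γ₁ γ₂ z < bdT γ₁ γ₂ y := by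
  unfold bdT
  have h' : (y : ℝ) < z := by exact_mod_cast h
  gcongr

omit hγ₁ hγ₂ in
lemma bdStep_eq (q : ℝ) (x : ℕ) :
    bdStep γ₁ γ₂ q x = if q < bdT γ₁ γ₂ x then x + 1 else x - 1 := rfl

omit hγ₁ hγ₂ in
lemma bdStep_le (q : ℝ) (x : ℕ) : bdStep γ₁ γ₂ q x ≤ x + 1 := by
  rw [bdStep_eq]; split <;> omega

omit hγ₁ hγ₂ in
lemma bdStep_down {q : ℝ} {x : ℕ} (_hx : 1 ≤ x) (hq : bdT γ₁ γ₂ x ≤ q) :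
    bdStep γ₁ γ₂ q x = x - 1 := by
  rw [bdStep_eq, if_neg (not_lt.mpr hq)]

omit hγ₁ hγ₂ in
lemma bdStep_exit {q : ℝ} {y D : ℕ} (hD : 0 < D)
    (h : bdStep γ₁ γ₂ q (y + D) = bdStep γ₁ γ₂ q y + D) :
    ¬ (bdT γ₁ γ₂ (y + D) ≤ q ∧ q < bdT γ₁ γ₂ y) := by
  rintro ⟨h1, h2⟩
  rw [bdStep_eq, bdStep_eq, if_neg (not_lt.mpr h1), if_pos h2] at h
  omega

-- prefix dependence
omit hγ₁ hγ₂ in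
lemma bdCocycle_congr {q q' : ℕ → ℝ} {n : ℕ} (h : ∀ i < n, q i = q' i) :
    ∀ k ≤ n, ∀ x, bdCocycle γ₁ γ₂ q k x = bdCocycle γ₁ γ₂ q' k x := by
  intro k hk x
  induction k with
  | zero => rfl
  | succ m ih =>
    have hm : m ≤ n := by omega
    simp only [bdCocycle, ih hm, h m (by omega)]

omit hγ₁ hγ₂ in
lemma measurable_bdStep_comp {α : Type*} [MeasurableSpace α] {f : α → ℝ} {g : α → ℕ}
    (hf : Measurable f) (hg : Measurable g) :
    Measurable (fun a => bdStep γ₁ γ₂ (f a) (g a)) := by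
  have h1 : Measurable (fun p : ℝ × ℕ => bdStep γ₁ γ₂ p.1 p.2) := by
    apply measurable_from_prod_countable_left
    intro y
    simp only [bdStep]
    exact Measurable.ite measurableSet_Iio measurable_const measurable_const
  exact h1.comp (hf.prodMk hg)

omit hγ₁ hγ₂ in
lemma measurable_bdCocycle (n x : ℕ) :
    Measurable (fun q : ℕ → ℝ => bdCocycle γ₁ γ₂ q n x) := by
  induction n with
  | zero => exact measurable_const
  | succ m ih =>
    exact measurable_bdStep_comp (measurable_pi_apply m) ih

end helpers

noncomputable section main
open Set

/-- the event that the difference is maintained up to time `n` -/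
def bdB (γ₁ γ₂ : ℝ) (D y₀ : ℕ) (n : ℕ) : Set (ℕ → ℝ) :=
  {q | ∀ k ≤ n, bdCocycle γ₁ γ₂ q k (y₀ + D) = bdCocycle γ₁ γ₂ q k y₀ + D}

def bdC (γ₁ γ₂ : ℝ) (D y₀ Y : ℕ) (n : ℕ) : Set (ℕ → ℝ) :=
  bdB γ₁ γ₂ D y₀ n ∩ {q | bdCocycle γ₁ γ₂ q n y₀ < Y}

variable {γ₁ γ₂ : ℝ}

lemma measurableSet_eqTraj (n x : ℕ) (y : ℕ) :
    MeasurableSet {q : ℕ → ℝ | bdCocycle γ₁ γ₂ q n x = y} :=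
  (measurable_bdCocycle n x) (measurableSet_singleton y)

lemma measurableSet_diffTraj (k : ℕ) (D y₀ : ℕ) :
    MeasurableSet {q : ℕ → ℝ | bdCocycle γ₁ γ₂ q k (y₀ + D) = bdCocycle γ₁ γ₂ q k y₀ + D} := by
  have h : {q : ℕ → ℝ | bdCocycle γ₁ γ₂ q k (y₀ + D) = bdCocycle γ₁ γ₂ q k y₀ + D}
      = ⋃ m : ℕ, ({q | bdCocycle γ₁ γ₂ q k (y₀ + D) = m + D} ∩ {q | bdCocycle γ₁ γ₂ q k y₀ = m}) := by
    ext q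
    simp only [Set.mem_setOf_eq, Set.mem_iUnion, Set.mem_inter_iff]
    constructor
    · intro h; exact ⟨bdCocycle γ₁ γ₂ q k y₀, h, rfl⟩
    · rintro ⟨m, h1, h2⟩; rw [h2]; exact h1
  rw [h]
  exact MeasurableSet.iUnion fun m => (measurableSet_eqTraj _ _ _).inter (measurableSet_eqTraj _ _ _)

lemma measurableSet_bdB (D y₀ n : ℕ) : MeasurableSet (bdB γ₁ γ₂ D y₀ n) := by
  have h : bdB γ₁ γ₂ D y₀ n = ⋂ k ∈ Set.Iic n,
      {q : ℕ → ℝ | bdCocycle γ₁ γ₂ q k (y₀ + D) = bdCocycle γ₁ γ₂ q k y₀ + D} := by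
    ext q; simp [bdB, Set.mem_iInter]
  rw [h]
  exact MeasurableSet.biInter (Set.to_countable _) fun k _ => measurableSet_diffTraj k D y₀

lemma measurableSet_bdC (D y₀ Y n : ℕ) : MeasurableSet (bdC γ₁ γ₂ D y₀ Y n) := by
  have h : {q : ℕ → ℝ | bdCocycle γ₁ γ₂ q n y₀ < Y}
      = ⋃ y ∈ Finset.range Y, {q : ℕ → ℝ | bdCocycle γ₁ γ₂ q n y₀ = y} := by
    ext q
    simp only [Set.mem_setOf_eq, Set.mem_iUnion, Finset.mem_range, exists_prop]
    constructor
    · intro h; exact ⟨_, h, rfl⟩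
    · rintro ⟨m, h1, h2⟩; omega
  exact (measurableSet_bdB D y₀ n).inter (by
    rw [h]; exact MeasurableSet.biUnion (Finset.range Y).countable_toSet
      fun y _ => measurableSet_eqTraj n y₀ y)

/-- the one-step exit interval event, decomposed by the current state -/
def bdE (γ₁ γ₂ : ℝ) (D y₀ n y : ℕ) : Set (ℕ → ℝ) :=
  bdB γ₁ γ₂ D y₀ n ∩ {q | bdCocycle γ₁ γ₂ q n y₀ = y}

lemma measurableSet_bdE (D y₀ n y : ℕ) : MeasurableSet (bdE γ₁ γ₂ D y₀ n y) :=
  (measurableSet_bdB D y₀ n).inter (measurableSet_eqTraj n y₀ y)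

/-- extension of a finite tuple by zero -/
def bdExt (n : ℕ) (v : ↥(Finset.range n) → ℝ) : ℕ → ℝ :=
  fun i => if h : i ∈ Finset.range n then v ⟨i, h⟩ else 0

lemma measurable_bdExt (n : ℕ) : Measurable (bdExt n) := by
  apply measurable_pi_lambda
  intro i
  unfold bdExt
  by_cases h : i ∈ Finset.range n
  · simpa [h] using measurable_pi_apply (⟨i, h⟩ : ↥(Finset.range n))
  · simpa [h] using measurable_const

lemma bdExt_cocycle (n : ℕ) (q : ℕ → ℝ) {k : ℕ} (hk : k ≤ n) (x : ℕ) :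
    bdCocycle γ₁ γ₂ (bdExt n (fun j : ↥(Finset.range n) => q j)) k x
      = bdCocycle γ₁ γ₂ q k x := by
  refine bdCocycle_congr (fun i hi => ?_) k hk x
  simp [bdExt, Finset.mem_range.mpr hi]

lemma bdE_preimage (D y₀ n y : ℕ) :
    bdE γ₁ γ₂ D y₀ n y = (fun q : ℕ → ℝ => fun j : ↥(Finset.range n) => q j) ⁻¹'
      (bdExt n ⁻¹' bdE γ₁ γ₂ D y₀ n y) := by
  ext q
  simp only [Set.mem_preimage, bdE, bdB, Set.mem_inter_iff, Set.mem_setOf_eq]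
  constructor
  · rintro ⟨h1, h2⟩
    refine ⟨fun k hk => ?_, ?_⟩
    · rw [bdExt_cocycle n q hk, bdExt_cocycle n q hk]; exact h1 k hk
    · rw [bdExt_cocycle n q le_rfl]; exact h2
  · rintro ⟨h1, h2⟩
    refine ⟨fun k hk => ?_, ?_⟩
    · have := h1 k hk; rwa [bdExt_cocycle n q hk, bdExt_cocycle n q hk] at this
    · rwa [bdExt_cocycle n q le_rfl] at h2

lemma coord_measure (P : Measure (ℕ → ℝ))
    (hUnif : ∀ n : ℕ, P.map (fun q => q n) = volume.restrict (Set.Icc (0:ℝ) 1))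
    (n : ℕ) {a b : ℝ} (ha : 0 ≤ a) (hb : b ≤ 1) :
    P {q : ℕ → ℝ | q n ∈ Set.Ico a b} = ENNReal.ofReal (b - a) := by
  have h1 : {q : ℕ → ℝ | q n ∈ Set.Ico a b} = (fun q : ℕ → ℝ => q n) ⁻¹' Set.Ico a b := rfl
  rw [h1, ← Measure.map_apply (measurable_pi_apply n) measurableSet_Ico, hUnif n,
    Measure.restrict_apply measurableSet_Ico]
  have h2 : Set.Ico a b ∩ Set.Icc 0 1 = Set.Ico a b := Set.inter_eq_left.mpr
    (fun x hx => ⟨le_trans ha hx.1, le_trans hx.2.le hb⟩)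
  rw [h2, Real.volume_Ico]

lemma keyA (hγ₁ : 0 < γ₁) (hγ₂ : 0 < γ₂) (P : Measure (ℕ → ℝ)) [IsProbabilityMeasure P]
    (hIndep : iIndepFun (fun n (q : ℕ → ℝ) => q n) P)
    (hUnif : ∀ n : ℕ, P.map (fun q => q n) = volume.restrict (Set.Icc (0:ℝ) 1))
    (D y₀ Y : ℕ) (hD : 0 < D) (ε : ℝ)
    (hεle : ∀ y < Y, ε ≤ bdT γ₁ γ₂ y - bdT γ₁ γ₂ (y + D)) (n : ℕ) :
    P (bdB γ₁ γ₂ D y₀ (n+1)) + ENNReal.ofReal ε * P (bdC γ₁ γ₂ D y₀ Y n)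
      ≤ P (bdB γ₁ γ₂ D y₀ n) := by
  classical
  set F : ℕ → Set (ℕ → ℝ) := fun y =>
    bdE γ₁ γ₂ D y₀ n y ∩ {q | q n ∈ Set.Ico (bdT γ₁ γ₂ (y + D)) (bdT γ₁ γ₂ y)} with hF
  have hFmeas : ∀ y, MeasurableSet (F y) := fun y =>
    (measurableSet_bdE D y₀ n y).inter ((measurable_pi_apply n) measurableSet_Ico)
  -- product formula
  have hmul : ∀ y, P (F y) = P (bdE γ₁ γ₂ D y₀ n y)
      * ENNReal.ofReal (bdT γ₁ γ₂ y - bdT γ₁ γ₂ (y + D)) := by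
    intro y
    have hdisj : Disjoint (Finset.range n) ({n} : Finset ℕ) := by simp
    have hIF := hIndep.indepFun_finset (Finset.range n) {n} hdisj (fun i => measurable_pi_apply i)
    have hM1 : MeasurableSet (bdExt n ⁻¹' bdE γ₁ γ₂ D y₀ n y) :=
      (measurable_bdExt n) (measurableSet_bdE D y₀ n y)
    have hM2 : MeasurableSet ((fun v : ↥({n} : Finset ℕ) → ℝ =>
        v ⟨n, Finset.mem_singleton_self n⟩) ⁻¹' Set.Ico (bdT γ₁ γ₂ (y + D)) (bdT γ₁ γ₂ y)) :=
      (measurable_pi_apply _) measurableSet_Ico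
    have hprod := hIF.measure_inter_preimage_eq_mul _ _ hM1 hM2
    have h2 : {q : ℕ → ℝ | q n ∈ Set.Ico (bdT γ₁ γ₂ (y + D)) (bdT γ₁ γ₂ y)}
        = (fun q : ℕ → ℝ => fun j : ↥({n} : Finset ℕ) => q j) ⁻¹'
          ((fun v : ↥({n} : Finset ℕ) → ℝ => v ⟨n, Finset.mem_singleton_self n⟩)
            ⁻¹' Set.Ico (bdT γ₁ γ₂ (y + D)) (bdT γ₁ γ₂ y)) := rfl
    show P (bdE γ₁ γ₂ D y₀ n y ∩ {q | q n ∈ Set.Ico (bdT γ₁ γ₂ (y + D)) (bdT γ₁ γ₂ y)})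
      = P (bdE γ₁ γ₂ D y₀ n y) * ENNReal.ofReal (bdT γ₁ γ₂ y - bdT γ₁ γ₂ (y + D))
    rw [← coord_measure P hUnif n (bdT_pos hγ₁ hγ₂ (y + D)).le (bdT_le_one hγ₁ hγ₂ y)]
    rw [bdE_preimage D y₀ n y, h2]
    exact hprod
  -- decomposition of bdC into the slices bdE
  have hCsum : P (bdC γ₁ γ₂ D y₀ Y n) = ∑ y ∈ Finset.range Y, P (bdE γ₁ γ₂ D y₀ n y) := by
    have hset : bdC γ₁ γ₂ D y₀ Y n = ⋃ y ∈ Finset.range Y, bdE γ₁ γ₂ D y₀ n y := by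
      ext q
      simp only [bdC, bdE, Set.mem_inter_iff, Set.mem_setOf_eq, Set.mem_iUnion,
        Finset.mem_range, exists_prop]
      constructor
      · rintro ⟨h1, h2⟩; exact ⟨_, h2, h1, rfl⟩
      · rintro ⟨m, hm, h1, h2⟩; exact ⟨h1, by omega⟩
    rw [hset]
    refine measure_biUnion_finset ?_ (fun y _ => measurableSet_bdE D y₀ n y)
    intro a _ b _ hab
    refine Set.disjoint_left.mpr fun q hqa hqb => hab ?_
    rw [← hqa.2, ← hqb.2]
  have hFdisjB : ∀ y, Disjoint (bdB γ₁ γ₂ D y₀ (n+1)) (F y) := by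
    intro y
    refine Set.disjoint_left.mpr fun q hq1 hq2 => ?_
    have hq1' : ∀ k ≤ n + 1, bdCocycle γ₁ γ₂ q k (y₀ + D) = bdCocycle γ₁ γ₂ q k y₀ + D := hq1
    obtain ⟨⟨hB, hEq⟩, hIco⟩ := hq2
    have hEq' : bdCocycle γ₁ γ₂ q n y₀ = y := hEq
    have hEqn : bdCocycle γ₁ γ₂ q n (y₀ + D) = y + D := by
      rw [hB n le_rfl, hEq']
    have hstep : bdStep γ₁ γ₂ (q n) (y + D) = bdStep γ₁ γ₂ (q n) y + D := by
      have e1 : bdCocycle γ₁ γ₂ q (n+1) (y₀+D)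
          = bdStep γ₁ γ₂ (q n) (bdCocycle γ₁ γ₂ q n (y₀+D)) := rfl
      have e2 : bdCocycle γ₁ γ₂ q (n+1) y₀
          = bdStep γ₁ γ₂ (q n) (bdCocycle γ₁ γ₂ q n y₀) := rfl
      have hn1 := hq1' (n+1) le_rfl
      rw [e1, e2, hEqn, hEq'] at hn1
      exact hn1
    exact bdStep_exit hD hstep ⟨hIco.1, hIco.2⟩
  have hFsub : ∀ y, F y ⊆ bdB γ₁ γ₂ D y₀ n := fun y q hq => hq.1.1
  have hBsub : bdB γ₁ γ₂ D y₀ (n+1) ⊆ bdB γ₁ γ₂ D y₀ n := fun q hq k hk => hq k (by omega)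
  have hUmeas : MeasurableSet (⋃ y ∈ Finset.range Y, F y) :=
    (Finset.range Y).measurableSet_biUnion fun y _ => hFmeas y
  have hdisjU : Disjoint (bdB γ₁ γ₂ D y₀ (n+1)) (⋃ y ∈ Finset.range Y, F y) :=
    Set.disjoint_iUnion_right.mpr fun y => Set.disjoint_iUnion_right.mpr fun _ => hFdisjB y
  have hFpair : (↑(Finset.range Y) : Set ℕ).PairwiseDisjoint F := by
    intro a _ b _ hab
    refine Set.disjoint_left.mpr fun q hqa hqb => hab ?_
    rw [← hqa.1.2, ← hqb.1.2]
  calc P (bdB γ₁ γ₂ D y₀ (n+1)) + ENNReal.ofReal ε * P (bdC γ₁ γ₂ D y₀ Y n)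
      = P (bdB γ₁ γ₂ D y₀ (n+1))
        + ∑ y ∈ Finset.range Y, ENNReal.ofReal ε * P (bdE γ₁ γ₂ D y₀ n y) := by
        rw [hCsum, Finset.mul_sum]
    _ ≤ P (bdB γ₁ γ₂ D y₀ (n+1)) + ∑ y ∈ Finset.range Y, P (F y) := by
        refine add_le_add_right (Finset.sum_le_sum fun y hy => ?_) _
        rw [hmul y, mul_comm (P (bdE γ₁ γ₂ D y₀ n y))]
        exact mul_le_mul_left (ENNReal.ofReal_le_ofReal (hεle y (Finset.mem_range.mp hy))) _
    _ = P (bdB γ₁ γ₂ D y₀ (n+1) ∪ ⋃ y ∈ Finset.range Y, F y) := by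
        rw [measure_union hdisjU hUmeas, measure_biUnion_finset hFpair (fun y _ => hFmeas y)]
    _ ≤ P (bdB γ₁ γ₂ D y₀ n) := by
        refine measure_mono (Set.union_subset hBsub ?_)
        exact Set.iUnion₂_subset fun y _ => hFsub y

lemma keyDrift (hγ₁ : 0 < γ₁) (hγ₂ : 0 < γ₂) (y₀ Y : ℕ) (hY1 : 1 ≤ Y) {c' : ℝ}
    (hc' : c' = bdT γ₁ γ₂ Y) (hc'half : c' < 1/2) (q : ℕ → ℝ)
    (hq : Tendsto (fun n : ℕ => (n:ℝ)⁻¹ *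
      ∑ i ∈ Finset.range n, (if q i < c' then (1:ℝ) else 0)) atTop (𝓝 c'))
    (N : ℕ) : ∃ n, N ≤ n ∧ bdCocycle γ₁ γ₂ q n y₀ < Y := by
  by_contra hcon
  push_neg at hcon
  have hN : ∀ n, N ≤ n → Y ≤ bdCocycle γ₁ γ₂ q n y₀ := fun n hn => hcon n hn
  set Z : ℕ → ℝ := fun i => if q i < c' then (1:ℝ) else 0 with hZ
  set A : ℕ → ℝ := fun n => ∑ i ∈ Finset.range n, Z i with hA
  set W : ℕ → ℝ := fun n => 2 * A n - n with hW
  have hWlim : Tendsto W atTop atBot := by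
    have h1 : Tendsto (fun n : ℕ => 2 * ((n:ℝ)⁻¹ * A n) - 1) atTop (𝓝 (2 * c' - 1)) := by
      have h2c : (2 : ℝ) * c' - 1 = 2 * c' - 1 := rfl
      exact (hq.const_mul 2).sub_const 1
    have hlt : (2*c'-1) < (2*c'-1)/2 := by linarith
    have h2 : ∀ᶠ n : ℕ in atTop, W n ≤ (n:ℝ) * ((2*c'-1)/2) := by
      filter_upwards [h1.eventually_lt_const hlt, eventually_ge_atTop 1] with n hn hn1
      have hn0 : (0:ℝ) < n := by exact_mod_cast hn1
      have he : W n = (2 * ((n:ℝ)⁻¹ * A n) - 1) * n := by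
        field_simp [hW]
        rfl
      rw [he]
      calc (2 * ((n:ℝ)⁻¹ * A n) - 1) * n ≤ ((2*c'-1)/2) * n := by nlinarith
        _ = (n:ℝ) * ((2*c'-1)/2) := mul_comm _ _
    have h3 : Tendsto (fun n : ℕ => (n:ℝ) * ((2*c'-1)/2)) atTop atBot :=
      Tendsto.atTop_mul_const_of_neg (by linarith) tendsto_natCast_atTop_atTop
    exact tendsto_atBot_mono' atTop h2 h3
  have hgrow : ∀ n, N ≤ n →
      (bdCocycle γ₁ γ₂ q n y₀ : ℝ) ≤ (bdCocycle γ₁ γ₂ q N y₀ : ℝ) + (W n - W N) := by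
    intro n hn
    induction n, hn using Nat.le_induction with
    | base => simp
    | succ m hm ih =>
      have hYm : Y ≤ bdCocycle γ₁ γ₂ q m y₀ := hN m hm
      have hWm : W (m+1) = W m + (2 * Z m - 1) := by
        simp only [hW, hA, Finset.sum_range_succ]; push_cast; ring
      have estep : bdCocycle γ₁ γ₂ q (m+1) y₀
          = bdStep γ₁ γ₂ (q m) (bdCocycle γ₁ γ₂ q m y₀) := rfl
      by_cases hqm : q m < c'
      · have hZm : Z m = 1 := if_pos hqm
        have hle : (bdCocycle γ₁ γ₂ q (m+1) y₀ : ℝ) ≤ (bdCocycle γ₁ γ₂ q m y₀ : ℝ) + 1 := by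
          rw [estep]
          have := bdStep_le (γ₁ := γ₁) (γ₂ := γ₂) (q m) (bdCocycle γ₁ γ₂ q m y₀)
          exact_mod_cast this
        rw [hWm, hZm]; linarith
      · have hZm : Z m = 0 := if_neg hqm
        have h1le : 1 ≤ bdCocycle γ₁ γ₂ q m y₀ := le_trans hY1 hYm
        have hq' : bdT γ₁ γ₂ (bdCocycle γ₁ γ₂ q m y₀) ≤ q m :=
          le_trans (le_trans (bdT_anti hγ₁ hγ₂ hYm) (le_of_eq hc'.symm)) (not_lt.mp hqm)
        have hdown : bdCocycle γ₁ γ₂ q (m+1) y₀ = bdCocycle γ₁ γ₂ q m y₀ - 1 := by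
          rw [estep]; exact bdStep_down h1le hq'
        have hcast : (bdCocycle γ₁ γ₂ q (m+1) y₀ : ℝ) = (bdCocycle γ₁ γ₂ q m y₀ : ℝ) - 1 := by
          rw [hdown]; push_cast [h1le]; ring
        rw [hWm, hZm, hcast]; linarith
  obtain ⟨n, hn1, hn2⟩ := ((eventually_ge_atTop N).and
    (hWlim.eventually (eventually_lt_atBot (W N - (bdCocycle γ₁ γ₂ q N y₀ : ℝ))))).exists
  have hg := hgrow n hn1
  have h0 : (0:ℝ) ≤ (bdCocycle γ₁ γ₂ q n y₀ : ℝ) := Nat.cast_nonneg _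
  linarith

lemma bd_main (hγ₁ : 0 < γ₁) (hγ₂ : 0 < γ₂) (P : Measure (ℕ → ℝ)) [IsProbabilityMeasure P]
    (hIndep : iIndepFun (fun n (q : ℕ → ℝ) => q n) P)
    (hUnif : ∀ n : ℕ, P.map (fun q => q n) = volume.restrict (Set.Icc (0:ℝ) 1))
    (D y₀ : ℕ) (hD : 0 < D) :
    P {q : ℕ → ℝ | ∀ n, bdCocycle γ₁ γ₂ q n (y₀ + D) = bdCocycle γ₁ γ₂ q n y₀ + D} = 0 := by
  classical
  set Y : ℕ := ⌈γ₁ / γ₂⌉₊ + 1 with hYdef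
  have hY1 : 1 ≤ Y := by omega
  set c' : ℝ := bdT γ₁ γ₂ Y with hc'def
  have hc'pos : 0 < c' := bdT_pos hγ₁ hγ₂ Y
  have hc'half : c' < 1/2 := by
    have h1 : γ₁ / γ₂ ≤ (⌈γ₁/γ₂⌉₊ : ℝ) := Nat.le_ceil _
    have h3 : γ₂ * (γ₁ / γ₂) = γ₁ := by field_simp
    have hY : γ₁ < γ₂ * Y := by
      have h2 : ((Y : ℕ) : ℝ) = (⌈γ₁/γ₂⌉₊ : ℝ) + 1 := by rw [hYdef]; push_cast; ring
      rw [h2]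
      nlinarith [mul_le_mul_of_nonneg_left h1 hγ₂.le]
    rw [hc'def, bdT, div_lt_iff₀ (bdT_denom_pos hγ₁ hγ₂ Y)]
    nlinarith
  -- the uniform exit-interval lower bound
  set gaps : Finset ℝ := (Finset.range Y).image (fun y => bdT γ₁ γ₂ y - bdT γ₁ γ₂ (y + D))
    with hgaps
  have hne : gaps.Nonempty := Finset.Nonempty.image ⟨0, Finset.mem_range.mpr hY1⟩ _
  set ε : ℝ := gaps.min' hne with hεdef
  have hεpos : 0 < ε := by
    rw [hεdef, Finset.lt_min'_iff]
    intro b hb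
    rw [hgaps] at hb
    simp only [Finset.mem_image] at hb
    obtain ⟨y, hy, rfl⟩ := hb
    have := bdT_strictAnti hγ₁ hγ₂ (show y < y + D by omega)
    linarith
  have hεle : ∀ y < Y, ε ≤ bdT γ₁ γ₂ y - bdT γ₁ γ₂ (y + D) := fun y hy =>
    Finset.min'_le _ _ (Finset.mem_image_of_mem _ (Finset.mem_range.mpr hy))
  -- telescoping sum
  have keyB : ∀ N, (∑ n ∈ Finset.range N, ENNReal.ofReal ε * P (bdC γ₁ γ₂ D y₀ Y n))
      + P (bdB γ₁ γ₂ D y₀ N) ≤ 1 := by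
    intro N
    induction N with
    | zero => simpa using prob_le_one
    | succ N ih =>
      rw [Finset.sum_range_succ]
      refine le_trans ?_ ih
      have hA := keyA hγ₁ hγ₂ P hIndep hUnif D y₀ Y hD ε hεle N
      calc (∑ n ∈ Finset.range N, ENNReal.ofReal ε * P (bdC γ₁ γ₂ D y₀ Y n))
            + ENNReal.ofReal ε * P (bdC γ₁ γ₂ D y₀ Y N) + P (bdB γ₁ γ₂ D y₀ (N+1))
          = (∑ n ∈ Finset.range N, ENNReal.ofReal ε * P (bdC γ₁ γ₂ D y₀ Y n))
            + (P (bdB γ₁ γ₂ D y₀ (N+1)) + ENNReal.ofReal ε * P (bdC γ₁ γ₂ D y₀ Y N)) := by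
            ring
        _ ≤ (∑ n ∈ Finset.range N, ENNReal.ofReal ε * P (bdC γ₁ γ₂ D y₀ Y n))
            + P (bdB γ₁ γ₂ D y₀ N) := add_le_add_right hA _
  have htsum : ∑' n, P (bdC γ₁ γ₂ D y₀ Y n) ≠ ⊤ := by
    have h1 : ∑' n, ENNReal.ofReal ε * P (bdC γ₁ γ₂ D y₀ Y n) ≤ 1 := by
      rw [ENNReal.tsum_eq_iSup_nat]
      exact iSup_le fun N => le_trans le_self_add (keyB N)
    rw [ENNReal.tsum_mul_left] at h1
    have hεzero : (ENNReal.ofReal ε) ≠ 0 := by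
      simp only [ne_eq, ENNReal.ofReal_eq_zero, not_le]; linarith
    have h2 : ∑' n, P (bdC γ₁ γ₂ D y₀ Y n) ≤ (ENNReal.ofReal ε)⁻¹ :=
      ENNReal.le_inv_iff_mul_le.mpr (by rwa [mul_comm])
    exact ne_top_of_le_ne_top (ENNReal.inv_ne_top.mpr hεzero) h2
  have hlimsup : P (limsup (fun n => bdC γ₁ γ₂ D y₀ Y n) atTop) = 0 :=
    measure_limsup_atTop_eq_zero htsum
  -- strong law of large numbers
  set Z : ℕ → (ℕ → ℝ) → ℝ := fun i q => if q i < c' then (1:ℝ) else 0 with hZdef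
  have hg : Measurable (fun r : ℝ => if r < c' then (1:ℝ) else 0) :=
    Measurable.ite measurableSet_Iio measurable_const measurable_const
  have hZmeas : ∀ i, Measurable (Z i) := fun i => hg.comp (measurable_pi_apply i)
  have hint : Integrable (Z 0) P := by
    refine (integrable_const (1:ℝ)).mono' ((hZmeas 0).aestronglyMeasurable) ?_
    filter_upwards with q
    rw [hZdef]; dsimp only; split <;> simp
  have hpair : Pairwise (Function.onFun (IndepFun · · P) Z) := fun i j hij =>
    (hIndep.indepFun hij).comp hg hg
  have hident : ∀ i, IdentDistrib (Z i) (Z 0) P P := by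
    intro i
    have hc : IdentDistrib (fun q : ℕ → ℝ => q i) (fun q : ℕ → ℝ => q 0) P P :=
      ⟨(measurable_pi_apply i).aemeasurable, (measurable_pi_apply 0).aemeasurable,
        by rw [hUnif i, hUnif 0]⟩
    exact hc.comp hg
  have hexp : P[Z 0] = c' := by
    have h0 : ∫ x, (if x < c' then (1:ℝ) else 0) ∂(P.map (fun q : ℕ → ℝ => q 0))
        = ∫ q : ℕ → ℝ, (if q 0 < c' then (1:ℝ) else 0) ∂P :=
      integral_map (measurable_pi_apply 0).aemeasurable hg.aestronglyMeasurable
    have h0' : P[Z 0] = ∫ x, (if x < c' then (1:ℝ) else 0) ∂(P.map (fun q : ℕ → ℝ => q 0)) :=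
      h0.symm
    rw [h0', hUnif 0]
    have hind : (fun x : ℝ => if x < c' then (1:ℝ) else 0)
        = Set.indicator (Set.Iio c') (fun _ => (1:ℝ)) := by
      ext x; simp [Set.indicator_apply, Set.mem_Iio]
    rw [hind, integral_indicator_const _ measurableSet_Iio, Measure.real,
      Measure.restrict_apply measurableSet_Iio]
    have hiico : Set.Iio c' ∩ Set.Icc 0 1 = Set.Ico 0 c' := by
      ext x
      simp only [Set.mem_inter_iff, Set.mem_Iio, Set.mem_Icc, Set.mem_Ico]
      constructor
      · rintro ⟨h1, h2, h3⟩; exact ⟨h2, h1⟩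
      · rintro ⟨h1, h2⟩; exact ⟨h2, h1, by linarith⟩
    rw [hiico, Real.volume_Ico, smul_eq_mul, mul_one, ENNReal.toReal_ofReal (by linarith)]
    ring
  have hslln := strong_law_ae Z hint hpair hident
  rw [hexp] at hslln
  have hae : ∀ᵐ q ∂P, ∀ N, ∃ n, N ≤ n ∧ bdCocycle γ₁ γ₂ q n y₀ < Y := by
    filter_upwards [hslln] with q hq
    intro N
    refine keyDrift hγ₁ hγ₂ y₀ Y hY1 hc'def hc'half q ?_ N
    simpa [smul_eq_mul, hZdef] using hq
  set G : Set (ℕ → ℝ) := {q | ∀ N, ∃ n, N ≤ n ∧ bdCocycle γ₁ γ₂ q n y₀ < Y} with hGdef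
  have hGnull : P Gᶜ = 0 := by
    rw [hGdef, Set.compl_setOf]
    exact ae_iff.mp hae
  have hsub : {q : ℕ → ℝ | ∀ n, bdCocycle γ₁ γ₂ q n (y₀ + D) = bdCocycle γ₁ γ₂ q n y₀ + D}
      ⊆ (limsup (fun n => bdC γ₁ γ₂ D y₀ Y n) atTop) ∪ Gᶜ := by
    intro q hq
    by_cases hG : q ∈ G
    · left
      rw [limsup_eq_iInf_iSup_of_nat]
      simp only [iInf_eq_iInter, iSup_eq_iUnion, Set.mem_iInter, Set.mem_iUnion]
      intro N
      obtain ⟨n, hn, hlt⟩ := hG N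
      exact ⟨n, hn, ⟨fun k hk => hq k, hlt⟩⟩
    · right; exact hG
  refine le_antisymm ?_ zero_le
  calc P {q : ℕ → ℝ | ∀ n, bdCocycle γ₁ γ₂ q n (y₀ + D) = bdCocycle γ₁ γ₂ q n y₀ + D}
      ≤ P (limsup (fun n => bdC γ₁ γ₂ D y₀ Y n) atTop ∪ Gᶜ) := measure_mono hsub
    _ = 0 := measure_union_null hlimsup hGnull

end main

/-- Lemma (exit from a level set): let `P` be the product of uniform measures on `[0,1]`
(characterized by independent, uniformly distributed coordinates), `d ≠ 0` an integer and
`(x₀,y₀) ∈ ℕ²` with `x₀ − y₀ = d`. Then the two-point motion of the birth-death chain exits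
the level set `I_d = {(x,y) : x − y = d}` almost surely in finite time, i.e. the event that
the difference of the trajectories equals `d` for all times has probability zero. -/
theorem stmt2 (γ₁ γ₂ : ℝ) (hγ₁ : 0 < γ₁) (hγ₂ : 0 < γ₂)
    (P : Measure (ℕ → ℝ)) [IsProbabilityMeasure P]
    (hIndep : iIndepFun (fun n (q : ℕ → ℝ) => q n) P)
    (hUnif : ∀ n : ℕ, P.map (fun q => q n) = volume.restrict (Set.Icc (0 : ℝ) 1))
    (d : ℤ) (hd : d ≠ 0) (x₀ y₀ : ℕ) (hxy : (x₀ : ℤ) - (y₀ : ℤ) = d) :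
    P {q : ℕ → ℝ | ∀ n : ℕ,
      (bdCocycle γ₁ γ₂ q n x₀ : ℤ) - (bdCocycle γ₁ γ₂ q n y₀ : ℤ) = d} = 0 := by
  rcases lt_or_gt_of_ne hd with hneg | hpos
  · -- d < 0 : here y₀ = x₀ + (-d).toNat
    have hD : 0 < (-d).toNat := by omega
    have hy : y₀ = x₀ + (-d).toNat := by omega
    subst hy
    have hset : {q : ℕ → ℝ | ∀ n : ℕ,
        (bdCocycle γ₁ γ₂ q n x₀ : ℤ) - (bdCocycle γ₁ γ₂ q n (x₀ + (-d).toNat) : ℤ) = d}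
        = {q : ℕ → ℝ | ∀ n, bdCocycle γ₁ γ₂ q n (x₀ + (-d).toNat)
            = bdCocycle γ₁ γ₂ q n x₀ + (-d).toNat} := by
      ext q
      simp only [Set.mem_setOf_eq]
      constructor
      · intro h n; have := h n; omega
      · intro h n; have := h n; omega
    rw [hset]
    exact bd_main hγ₁ hγ₂ P hIndep hUnif _ x₀ hD
  · -- d > 0 : here x₀ = y₀ + d.toNat
    have hD : 0 < d.toNat := by omega
    have hx : x₀ = y₀ + d.toNat := by omega
    subst hx
    have hset : {q : ℕ → ℝ | ∀ n : ℕ,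
        (bdCocycle γ₁ γ₂ q n (y₀ + d.toNat) : ℤ) - (bdCocycle γ₁ γ₂ q n y₀ : ℤ) = d}
        = {q : ℕ → ℝ | ∀ n, bdCocycle γ₁ γ₂ q n (y₀ + d.toNat)
            = bdCocycle γ₁ γ₂ q n y₀ + d.toNat} := by
      ext q
      simp only [Set.mem_setOf_eq]
      constructor
      · intro h n; have := h n; omega
      · intro h n; have := h n; omega
    rw [hset]
    exact bd_main hγ₁ hγ₂ P hIndep hUnif _ y₀ hD
end

section
/- The random dynamical system of the embedded birth-death chain partially synchronizes with respect to the parity partition {W₀, W₁} of ℕ, where W₀ is the set of even and W₁ the set of odd natural numbers: for every x, y in the same Wᵢ (i ∈ {0,1}) and ℙ-a.e. q ∈ Q₊ there exists n₀ ∈ ℕ such that φⁿ_q(x) = φⁿ_q(y) for all n ≥ n₀. -/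
open MeasureTheory ProbabilityTheory Filter

namespace BD

/-- threshold -/
noncomputable def thr (γ₁ γ₂ : ℝ) (x : ℕ) : ℝ := γ₁ / (γ₁ + γ₂ * x)

variable {γ₁ γ₂ : ℝ}

lemma bdStep_eq (q : ℝ) (x : ℕ) :
    bdStep γ₁ γ₂ q x = if q < thr γ₁ γ₂ x then x + 1 else x - 1 := rfl

lemma thr_denom_pos (hγ₁ : 0 < γ₁) (hγ₂ : 0 < γ₂) (x : ℕ) : 0 < γ₁ + γ₂ * x := by
  have : (0:ℝ) ≤ γ₂ * x := mul_nonneg hγ₂.le (Nat.cast_nonneg x)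
  linarith

lemma thr_pos (hγ₁ : 0 < γ₁) (hγ₂ : 0 < γ₂) (x : ℕ) : 0 < thr γ₁ γ₂ x := div_pos hγ₁ (thr_denom_pos hγ₁ hγ₂ x)

lemma thr_le_one (hγ₁ : 0 < γ₁) (hγ₂ : 0 < γ₂) (x : ℕ) : thr γ₁ γ₂ x ≤ 1 := by
  rw [thr, div_le_one (thr_denom_pos hγ₁ hγ₂ x)]
  have : (0:ℝ) ≤ γ₂ * x := mul_nonneg hγ₂.le (Nat.cast_nonneg x)
  linarith

lemma thr_zero (hγ₁ : 0 < γ₁) : thr γ₁ γ₂ 0 = 1 := by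
  simp [thr, div_self hγ₁.ne']

lemma thr_anti (hγ₁ : 0 < γ₁) (hγ₂ : 0 < γ₂) {a b : ℕ} (hab : a ≤ b) : thr γ₁ γ₂ b ≤ thr γ₁ γ₂ a := by
  apply div_le_div_of_nonneg_left hγ₁.le (thr_denom_pos hγ₁ hγ₂ a)
  have h : (γ₂ : ℝ) * a ≤ γ₂ * b := by
    have : (a:ℝ) ≤ b := Nat.cast_le.2 hab
    nlinarith
  linarith

lemma bdStep_parity (hγ₁ : 0 < γ₁) (hγ₂ : 0 < γ₂) {q : ℝ} (hq : q < 1) (v : ℕ) :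
    bdStep γ₁ γ₂ q v % 2 = (v + 1) % 2 := by
  rw [bdStep_eq]
  split_ifs with h
  · rfl
  · match v with
    | 0 => exact absurd (by rw [thr_zero hγ₁] at h ⊢; exact hq) h
    | w + 1 => simp; omega

lemma bdStep_couple (hγ₁ : 0 < γ₁) (hγ₂ : 0 < γ₂) {q : ℝ} (hq : q < 1) {a b : ℕ} (hab : a ≤ b) (hpar : a % 2 = b % 2) :
    bdStep γ₁ γ₂ q a ≤ bdStep γ₁ γ₂ q b ∧
      bdStep γ₁ γ₂ q b - bdStep γ₁ γ₂ q a ≤ b - a := by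
  rcases eq_or_lt_of_le hab with rfl | hlt
  · simp
  have h2 : a + 2 ≤ b := by omega
  rw [bdStep_eq, bdStep_eq]
  by_cases hb : q < thr γ₁ γ₂ b
  · have ha : q < thr γ₁ γ₂ a := lt_of_lt_of_le hb (thr_anti hγ₁ hγ₂ hab)
    simp [ha, hb]; omega
  · by_cases ha : q < thr γ₁ γ₂ a
    · simp [ha, hb]; omega
    · have ha1 : 1 ≤ a := by
        by_contra h
        have : a = 0 := by omega
        subst this
        rw [thr_zero hγ₁] at ha
        exact ha hq
      simp [ha, hb]; omega

lemma cocycle_couple (hγ₁ : 0 < γ₁) (hγ₂ : 0 < γ₂) {q : ℕ → ℝ} (hq : ∀ k, q k < 1) {x y : ℕ} (hxy : x ≤ y)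
    (hpar : x % 2 = y % 2) (n : ℕ) :
    bdCocycle γ₁ γ₂ q n x ≤ bdCocycle γ₁ γ₂ q n y ∧
      bdCocycle γ₁ γ₂ q n y - bdCocycle γ₁ γ₂ q n x ≤ y - x ∧
      bdCocycle γ₁ γ₂ q n x % 2 = bdCocycle γ₁ γ₂ q n y % 2 := by
  induction n with
  | zero => exact ⟨hxy, le_rfl, hpar⟩
  | succ n ih =>
    obtain ⟨h1, h2, h3⟩ := ih
    obtain ⟨g1, g2⟩ := bdStep_couple hγ₁ hγ₂ (hq n) h1 h3
    refine ⟨g1, le_trans g2 h2, ?_⟩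
    rw [show bdCocycle γ₁ γ₂ q (n+1) x = bdStep γ₁ γ₂ (q n) (bdCocycle γ₁ γ₂ q n x) from rfl,
      show bdCocycle γ₁ γ₂ q (n+1) y = bdStep γ₁ γ₂ (q n) (bdCocycle γ₁ γ₂ q n y) from rfl,
      bdStep_parity hγ₁ hγ₂ (hq n), bdStep_parity hγ₁ hγ₂ (hq n)]
    omega

lemma cocycle_parity_shift (hγ₁ : 0 < γ₁) (hγ₂ : 0 < γ₂) {q : ℕ → ℝ} (hq : ∀ k, q k < 1) (z t : ℕ) (j : ℕ) :
    bdCocycle γ₁ γ₂ q (t + j) z % 2 = (bdCocycle γ₁ γ₂ q t z + j) % 2 := by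
  induction j with
  | zero => simp
  | succ j ih =>
    rw [show t + (j+1) = (t+j) + 1 from rfl,
      show bdCocycle γ₁ γ₂ q ((t+j)+1) z = bdStep γ₁ γ₂ (q (t+j)) (bdCocycle γ₁ γ₂ q (t+j) z)
        from rfl, bdStep_parity hγ₁ hγ₂ (hq (t+j))]
    omega

lemma cocycle_descent (hγ₁ : 0 < γ₁) (hγ₂ : 0 < γ₂) {q : ℕ → ℝ} {t J : ℕ}
    (hblk : ∀ j < J, thr γ₁ γ₂ 1 ≤ q (t + j)) (z : ℕ) :
    ∀ j ≤ J, bdCocycle γ₁ γ₂ q (t + j) z ≤ max (bdCocycle γ₁ γ₂ q t z - j) 1 := by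
  intro j
  induction j with
  | zero => intro _; simp
  | succ j ih =>
    intro hj
    have ihj := ih (by omega)
    rw [show t + (j+1) = (t+j) + 1 from rfl,
      show bdCocycle γ₁ γ₂ q ((t+j)+1) z = bdStep γ₁ γ₂ (q (t+j)) (bdCocycle γ₁ γ₂ q (t+j) z)
        from rfl, bdStep_eq]
    set v := bdCocycle γ₁ γ₂ q (t+j) z with hv
    split_ifs with h
    · -- step up: can only happen from v = 0, since q (t+j) ≥ thr 1 ≥ thr v for v ≥ 1
      have hv0 : v = 0 := by
        by_contra hv0
        have hv1 : 1 ≤ v := by omega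
        have hb := hblk j (by omega)
        have h2 := thr_anti hγ₁ hγ₂ hv1 (a := 1) (b := v)
        linarith
      rw [hv0]
      simp
    · -- step down
      omega

/-- If at time `t` both trajectories are below `J`, of equal parity, and the noise stays in
`[thr 1, 1)` during `[t, t+J)`, the trajectories coincide at time `t + J`. -/
lemma cocycle_merge (hγ₁ : 0 < γ₁) (hγ₂ : 0 < γ₂) {q : ℕ → ℝ} (hq : ∀ k, q k < 1) {t J x y : ℕ}
    (hblk : ∀ j < J, thr γ₁ γ₂ 1 ≤ q (t + j))
    (hx : bdCocycle γ₁ γ₂ q t x ≤ J) (hy : bdCocycle γ₁ γ₂ q t y ≤ J)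
    (hpar : bdCocycle γ₁ γ₂ q t x % 2 = bdCocycle γ₁ γ₂ q t y % 2) :
    bdCocycle γ₁ γ₂ q (t + J) x = bdCocycle γ₁ γ₂ q (t + J) y := by
  have hx' := cocycle_descent hγ₁ hγ₂ hblk x J le_rfl
  have hy' := cocycle_descent hγ₁ hγ₂ hblk y J le_rfl
  rw [Nat.sub_eq_zero_of_le hx] at hx'
  rw [Nat.sub_eq_zero_of_le hy] at hy'
  simp only [Nat.max_eq_right (Nat.zero_le 1)] at hx' hy'
  have hpx := cocycle_parity_shift hγ₁ hγ₂ hq x t J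
  have hpy := cocycle_parity_shift hγ₁ hγ₂ hq y t J
  omega

lemma cocycle_eq_of_eq {q : ℕ → ℝ} {x y n : ℕ}
    (h : bdCocycle γ₁ γ₂ q n x = bdCocycle γ₁ γ₂ q n y) :
    ∀ m, n ≤ m → bdCocycle γ₁ γ₂ q m x = bdCocycle γ₁ γ₂ q m y := by
  intro m
  induction m with
  | zero => intro hm; exact (Nat.le_zero.1 hm ▸ h :)
  | succ m ih =>
    intro hm
    rcases Nat.lt_or_ge n (m+1) with h1 | h1
    · have := ih (by omega)
      show bdStep γ₁ γ₂ (q m) _ = bdStep γ₁ γ₂ (q m) _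
      rw [this]
    · have : n = m + 1 := by omega
      exact this ▸ h

/-- Deterministic recurrence: if eventually the density of small noises is below `1/4`,
the trajectory returns below `M` infinitely often. -/
lemma recurrence (hγ₁ : 0 < γ₁) (hγ₂ : 0 < γ₂) {q : ℕ → ℝ} {M N : ℕ}
    (hcount : ∀ n ≥ N, 4 * ((Finset.range n).filter (fun k => q k < thr γ₁ γ₂ M)).card ≤ n)
    (z : ℕ) :
    ∀ n0, ∃ n ≥ n0, bdCocycle γ₁ γ₂ q n z ≤ M := by
  intro n0
  by_contra hcon
  push_neg at hcon
  set c : ℕ → ℕ := fun n => ((Finset.range n).filter (fun k => q k < thr γ₁ γ₂ M)).card with hc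
  set n1 := max n0 N with hn1
  have key : ∀ m, bdCocycle γ₁ γ₂ q (n1 + m) z + m ≤
      bdCocycle γ₁ γ₂ q n1 z + 2 * (c (n1 + m) - c n1) := by
    intro m
    induction m with
    | zero => simp
    | succ m ih =>
      have hcmono : c n1 ≤ c (n1 + m) := by
        apply Finset.card_le_card
        apply Finset.filter_subset_filter
        exact Finset.range_subset_range.2 (by omega)
      have hstate : M < bdCocycle γ₁ γ₂ q (n1 + m) z := hcon _ (by omega)
      have hsucc : c (n1 + m + 1) =
          c (n1 + m) + (if q (n1 + m) < thr γ₁ γ₂ M then 1 else 0) := by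
        rw [hc]
        simp only [Finset.range_add_one, Finset.filter_insert]
        split_ifs with h <;> simp [Finset.mem_range, Finset.mem_filter]
      rw [show n1 + (m+1) = (n1+m) + 1 from rfl,
        show bdCocycle γ₁ γ₂ q ((n1+m)+1) z
          = bdStep γ₁ γ₂ (q (n1+m)) (bdCocycle γ₁ γ₂ q (n1+m) z) from rfl, bdStep_eq]
      split_ifs with h
      · -- up step: then q (n1+m) < thr M
        have hsmall : q (n1 + m) < thr γ₁ γ₂ M :=
          lt_of_lt_of_le h (thr_anti hγ₁ hγ₂ (by omega))
        rw [hsucc]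
        simp only [hsmall, if_pos]
        omega
      · rw [hsucc]
        split_ifs <;> omega
  -- now derive a contradiction for large m
  set m := 2 * bdCocycle γ₁ γ₂ q n1 z + n1 + 1 with hm
  have h1 := key m
  have h2 : 4 * c (n1 + m) ≤ n1 + m := hcount _ (by omega)
  omega

/-! ### Measurability and locality -/

lemma measurable_cocycle (γ₁ γ₂ : ℝ) (n x : ℕ) :
    Measurable fun q : ℕ → ℝ => bdCocycle γ₁ γ₂ q n x := by
  induction n with
  | zero => exact measurable_const
  | succ n ih =>
    have hcond : MeasurableSet {q : ℕ → ℝ | q n < thr γ₁ γ₂ (bdCocycle γ₁ γ₂ q n x)} := by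
      have he : {q : ℕ → ℝ | q n < thr γ₁ γ₂ (bdCocycle γ₁ γ₂ q n x)} =
          ⋃ m : ℕ, ((fun q : ℕ → ℝ => bdCocycle γ₁ γ₂ q n x) ⁻¹' {m}) ∩
            ((fun q : ℕ → ℝ => q n) ⁻¹' Set.Iio (thr γ₁ γ₂ m)) := by
        ext q
        simp only [Set.mem_setOf_eq, Set.mem_iUnion, Set.mem_inter_iff, Set.mem_preimage,
          Set.mem_singleton_iff, Set.mem_Iio]
        exact ⟨fun h => ⟨_, rfl, h⟩, fun ⟨m, hm, h⟩ => hm ▸ h⟩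
      rw [he]
      exact MeasurableSet.iUnion fun m => (ih (measurableSet_singleton m)).inter
        ((measurable_pi_apply n) measurableSet_Iio)
    have heq : (fun q : ℕ → ℝ => bdCocycle γ₁ γ₂ q (n+1) x) =
        fun q => if q n < thr γ₁ γ₂ (bdCocycle γ₁ γ₂ q n x) then bdCocycle γ₁ γ₂ q n x + 1
          else bdCocycle γ₁ γ₂ q n x - 1 := rfl
    rw [heq]
    have h1 : Measurable fun q : ℕ → ℝ => bdCocycle γ₁ γ₂ q n x + 1 :=
      (measurable_from_top (f := fun v : ℕ => v + 1)).comp ih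
    have h2 : Measurable fun q : ℕ → ℝ => bdCocycle γ₁ γ₂ q n x - 1 :=
      (measurable_from_top (f := fun v : ℕ => v - 1)).comp ih
    exact Measurable.ite hcond h1 h2

lemma cocycle_local (γ₁ γ₂ : ℝ) {q q' : ℕ → ℝ} {n : ℕ} (h : ∀ i < n, q i = q' i) (x : ℕ) :
    bdCocycle γ₁ γ₂ q n x = bdCocycle γ₁ γ₂ q' n x := by
  induction n with
  | zero => rfl
  | succ n ih =>
    show bdStep γ₁ γ₂ (q n) _ = bdStep γ₁ γ₂ (q' n) _
    rw [ih (fun i hi => h i (by omega)), h n (by omega)]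

/-! ### Trial times -/

/-- Successive trial times: the `k`-th time (spaced at least `L` apart) the trajectory
started at `x` is `≤ M`. -/
noncomputable def bdT (γ₁ γ₂ : ℝ) (x M L : ℕ) (q : ℕ → ℝ) : ℕ → ℕ
  | 0 => sInf {n | bdCocycle γ₁ γ₂ q n x ≤ M}
  | k+1 => sInf {n | bdT γ₁ γ₂ x M L q k + L ≤ n ∧ bdCocycle γ₁ γ₂ q n x ≤ M}

/-- Candidate sets of trial times. -/
def bdS (γ₁ γ₂ : ℝ) (x M L : ℕ) (q : ℕ → ℝ) : ℕ → Set ℕ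
  | 0 => {n | bdCocycle γ₁ γ₂ q n x ≤ M}
  | k+1 => {n | bdT γ₁ γ₂ x M L q k + L ≤ n ∧ bdCocycle γ₁ γ₂ q n x ≤ M}

lemma bdT_eq (γ₁ γ₂ : ℝ) (x M L : ℕ) (q : ℕ → ℝ) (k : ℕ) :
    bdT γ₁ γ₂ x M L q k = sInf (bdS γ₁ γ₂ x M L q k) := by cases k <;> rfl

/-- Success block event: the noise stays in `[c, 1)` during `[t, t+L)`. -/
def bdBlk (c : ℝ) (L t : ℕ) (q : ℕ → ℝ) : Prop := ∀ j < L, q (t + j) ∈ Set.Ico c 1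

/-- Failure event: the first `K` trials are all well-defined and all fail. -/
def bdF (γ₁ γ₂ c : ℝ) (x M L K : ℕ) : Set (ℕ → ℝ) :=
  {q | ∀ k < K, (bdS γ₁ γ₂ x M L q k).Nonempty ∧ ¬ bdBlk c L (bdT γ₁ γ₂ x M L q k) q}

lemma nat_sInf_eq (S : Set ℕ) (m : ℕ) :
    sInf S = m ↔ ((m ∈ S ∧ ∀ j < m, j ∉ S) ∨ (m = 0 ∧ ∀ n, n ∉ S)) := by
  constructor
  · intro h
    rcases S.eq_empty_or_nonempty with he | hne
    · right
      subst he
      rw [Nat.sInf_empty] at h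
      exact ⟨h.symm, fun n => id⟩
    · exact Or.inl ⟨h ▸ Nat.sInf_mem hne, fun j hj => Nat.notMem_of_lt_sInf (h ▸ hj)⟩
  · rintro (⟨h1, h2⟩ | ⟨rfl, h⟩)
    · refine le_antisymm (Nat.sInf_le h1) ?_
      by_contra hc
      push_neg at hc
      exact h2 _ hc (Nat.sInf_mem ⟨m, h1⟩)
    · rw [Set.eq_empty_iff_forall_notMem.2 h, Nat.sInf_empty]

lemma measurable_T_of_S (γ₁ γ₂ : ℝ) (x M L k : ℕ)
    (hS : ∀ n, MeasurableSet {q : ℕ → ℝ | n ∈ bdS γ₁ γ₂ x M L q k}) :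
    Measurable (fun q => bdT γ₁ γ₂ x M L q k) := by
  apply measurable_to_countable'
  intro m
  have he : (fun q => bdT γ₁ γ₂ x M L q k) ⁻¹' {m} =
      (({q : ℕ → ℝ | m ∈ bdS γ₁ γ₂ x M L q k} ∩
        ⋂ j : ℕ, ⋂ _ : j < m, {q : ℕ → ℝ | j ∈ bdS γ₁ γ₂ x M L q k}ᶜ) ∪
      ({q : ℕ → ℝ | m = 0} ∩ ⋂ n : ℕ, {q : ℕ → ℝ | n ∈ bdS γ₁ γ₂ x M L q k}ᶜ)) := by
    ext q
    simp only [Set.mem_preimage, Set.mem_singleton_iff, bdT_eq, nat_sInf_eq, Set.mem_union,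
      Set.mem_inter_iff, Set.mem_iInter, Set.mem_compl_iff, Set.mem_setOf_eq]
  rw [he]
  refine MeasurableSet.union ((hS m).inter ?_) (MeasurableSet.inter ?_ ?_)
  · exact MeasurableSet.iInter fun j => MeasurableSet.iInter fun _ => (hS j).compl
  · rcases eq_or_ne m 0 with rfl | hm
    · simpa using MeasurableSet.univ
    · convert MeasurableSet.empty (α := ℕ → ℝ)
      simp [hm]
  · exact MeasurableSet.iInter fun n => (hS n).compl

lemma measurable_S_T (γ₁ γ₂ : ℝ) (x M L : ℕ) (k : ℕ) :
    (∀ n, MeasurableSet {q : ℕ → ℝ | n ∈ bdS γ₁ γ₂ x M L q k}) ∧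
      Measurable (fun q => bdT γ₁ γ₂ x M L q k) := by
  induction k with
  | zero =>
    have hS : ∀ n, MeasurableSet {q : ℕ → ℝ | n ∈ bdS γ₁ γ₂ x M L q 0} := by
      intro n
      have : {q : ℕ → ℝ | n ∈ bdS γ₁ γ₂ x M L q 0} =
          (fun q => bdCocycle γ₁ γ₂ q n x) ⁻¹' Set.Iic M := rfl
      rw [this]
      exact measurable_cocycle γ₁ γ₂ n x measurableSet_Iic
    exact ⟨hS, measurable_T_of_S γ₁ γ₂ x M L 0 hS⟩
  | succ k ih =>
    have hS : ∀ n, MeasurableSet {q : ℕ → ℝ | n ∈ bdS γ₁ γ₂ x M L q (k+1)} := by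
      intro n
      have he : {q : ℕ → ℝ | n ∈ bdS γ₁ γ₂ x M L q (k+1)} =
          ((fun q => bdT γ₁ γ₂ x M L q k) ⁻¹' {m | m + L ≤ n}) ∩
            ((fun q => bdCocycle γ₁ γ₂ q n x) ⁻¹' Set.Iic M) := rfl
      rw [he]
      exact (ih.2 trivial).inter (measurable_cocycle γ₁ γ₂ n x measurableSet_Iic)
    exact ⟨hS, measurable_T_of_S γ₁ γ₂ x M L (k+1) hS⟩

lemma measurableSet_Blk (c : ℝ) (L t : ℕ) : MeasurableSet {q : ℕ → ℝ | bdBlk c L t q} := by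
  have he : {q : ℕ → ℝ | bdBlk c L t q} =
      ⋂ j : ℕ, ⋂ _ : j < L, (fun q : ℕ → ℝ => q (t + j)) ⁻¹' Set.Ico c 1 := by
    ext q
    simp [bdBlk]
  rw [he]
  exact MeasurableSet.iInter fun j => MeasurableSet.iInter fun _ =>
    (measurable_pi_apply _) measurableSet_Ico

lemma measurableSet_F (γ₁ γ₂ c : ℝ) (x M L K : ℕ) :
    MeasurableSet (bdF γ₁ γ₂ c x M L K) := by
  have he : bdF γ₁ γ₂ c x M L K =
      ⋂ k : ℕ, ⋂ _ : k < K,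
        ((⋃ n : ℕ, {q : ℕ → ℝ | n ∈ bdS γ₁ γ₂ x M L q k}) ∩
          (⋃ t : ℕ, ((fun q => bdT γ₁ γ₂ x M L q k) ⁻¹' {t}) ∩
            {q : ℕ → ℝ | bdBlk c L t q})ᶜ) := by
    ext q
    simp only [bdF, Set.mem_setOf_eq, Set.mem_iInter, Set.mem_inter_iff, Set.mem_iUnion,
      Set.mem_compl_iff, Set.mem_preimage, Set.mem_singleton_iff, not_exists]
    constructor
    · intro h k hk
      refine ⟨(h k hk).1, ?_⟩
      rintro t ⟨rfl, hblk⟩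
      exact (h k hk).2 hblk
    · intro h k hk
      exact ⟨(h k hk).1, fun hblk => (h k hk).2 _ ⟨rfl, hblk⟩⟩
  rw [he]
  refine MeasurableSet.iInter fun k => MeasurableSet.iInter fun _ => MeasurableSet.inter ?_ ?_
  · exact MeasurableSet.iUnion fun n => (measurable_S_T γ₁ γ₂ x M L k).1 n
  · refine MeasurableSet.compl (MeasurableSet.iUnion fun t => MeasurableSet.inter ?_ ?_)
    · exact (measurable_S_T γ₁ γ₂ x M L k).2 (measurableSet_singleton t)
    · exact measurableSet_Blk c L t

/-! ### The decomposition events and locality -/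

/-- Failure of first `K` trials together with the `K`-th trial time being exactly `t`. -/
def bdC (γ₁ γ₂ c : ℝ) (x M L K t : ℕ) : Set (ℕ → ℝ) :=
  bdF γ₁ γ₂ c x M L K ∩
    {q | t ∈ bdS γ₁ γ₂ x M L q K ∧ ∀ n < t, n ∉ bdS γ₁ γ₂ x M L q K}

lemma measurableSet_C (γ₁ γ₂ c : ℝ) (x M L K t : ℕ) :
    MeasurableSet (bdC γ₁ γ₂ c x M L K t) := by
  have h2 : MeasurableSet {q : ℕ → ℝ | ∀ n < t, n ∉ bdS γ₁ γ₂ x M L q K} := by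
    have he : {q : ℕ → ℝ | ∀ n < t, n ∉ bdS γ₁ γ₂ x M L q K} =
        ⋂ n : ℕ, ⋂ _ : n < t, {q : ℕ → ℝ | n ∈ bdS γ₁ γ₂ x M L q K}ᶜ := by
      ext q; simp [Set.mem_iInter]
    rw [he]
    exact MeasurableSet.iInter fun n => MeasurableSet.iInter fun _ =>
      ((measurable_S_T γ₁ γ₂ x M L K).1 n).compl
  have he2 : {q : ℕ → ℝ | t ∈ bdS γ₁ γ₂ x M L q K ∧ ∀ n < t, n ∉ bdS γ₁ γ₂ x M L q K} =
      {q : ℕ → ℝ | t ∈ bdS γ₁ γ₂ x M L q K} ∩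
        {q : ℕ → ℝ | ∀ n < t, n ∉ bdS γ₁ γ₂ x M L q K} := rfl
  exact (measurableSet_F γ₁ γ₂ c x M L K).inter
    (he2 ▸ ((measurable_S_T γ₁ γ₂ x M L K).1 t).inter h2)

lemma sInf_transfer {S S' : Set ℕ} {t T0 : ℕ} (hEquiv : ∀ n ≤ t, (n ∈ S ↔ n ∈ S'))
    (hTt : T0 ≤ t) (hmemS : T0 ∈ S) (hT : sInf S = T0) : sInf S' = T0 := by
  have hmem' : T0 ∈ S' := (hEquiv T0 hTt).1 hmemS
  refine le_antisymm (Nat.sInf_le hmem') ?_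
  by_contra hc
  push_neg at hc
  have h1 : sInf S' ∈ S' := Nat.sInf_mem ⟨T0, hmem'⟩
  have h2 : sInf S' ∈ S := (hEquiv _ (le_trans hc.le hTt)).2 h1
  have h3 := Nat.sInf_le h2
  omega

lemma bdC_local (γ₁ γ₂ c : ℝ) (x M L K t : ℕ) {q q' : ℕ → ℝ}
    (hag : ∀ i < t, q i = q' i) (hq : q ∈ bdC γ₁ γ₂ c x M L K t) :
    q' ∈ bdC γ₁ γ₂ c x M L K t := by
  obtain ⟨hF, hmem, hmin⟩ := hq
  have hchain : ∀ d k, k + d + 1 = K → bdT γ₁ γ₂ x M L q k + L ≤ t := by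
    intro d
    induction d with
    | zero =>
      intro k hk
      have : K = k + 1 := by omega
      subst this
      exact hmem.1
    | succ d ih =>
      intro k hk
      have h1 : k + 1 < K := by omega
      have hne : (bdS γ₁ γ₂ x M L q (k+1)).Nonempty := (hF (k+1) h1).1
      have hTmem : bdT γ₁ γ₂ x M L q (k+1) ∈ bdS γ₁ γ₂ x M L q (k+1) := by
        rw [bdT_eq γ₁ γ₂ x M L q (k+1)]
        exact Nat.sInf_mem hne
      have h2 := ih (k+1) (by omega)
      have h3 : bdT γ₁ γ₂ x M L q k + L ≤ bdT γ₁ γ₂ x M L q (k+1) := hTmem.1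
      omega
  have hA : ∀ k, k < K → bdT γ₁ γ₂ x M L q k + L ≤ t := fun k hk =>
    hchain (K - k - 1) k (by omega)
  have hTq : ∀ k, k < K → bdT γ₁ γ₂ x M L q k ∈ bdS γ₁ γ₂ x M L q k := by
    intro k hk
    rw [bdT_eq γ₁ γ₂ x M L q k]
    exact Nat.sInf_mem (hF k hk).1
  have htrans : ∀ k, k ≤ K →
      (∀ n, n ≤ t → (n ∈ bdS γ₁ γ₂ x M L q k ↔ n ∈ bdS γ₁ γ₂ x M L q' k)) ∧
        (k < K → bdT γ₁ γ₂ x M L q' k = bdT γ₁ γ₂ x M L q k) := by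
    intro k
    induction k with
    | zero =>
      intro _
      have hmem0 : ∀ n, n ≤ t →
          (n ∈ bdS γ₁ γ₂ x M L q 0 ↔ n ∈ bdS γ₁ γ₂ x M L q' 0) := by
        intro n hn
        show bdCocycle γ₁ γ₂ q n x ≤ M ↔ bdCocycle γ₁ γ₂ q' n x ≤ M
        rw [cocycle_local γ₁ γ₂ (fun i hi => hag i (by omega)) x]
      refine ⟨hmem0, fun hK => ?_⟩
      rw [bdT_eq γ₁ γ₂ x M L q' 0]
      exact sInf_transfer hmem0 (by have := hA 0 hK; omega) (hTq 0 hK)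
        (bdT_eq γ₁ γ₂ x M L q 0).symm
    | succ k ih =>
      intro hk1
      have hkK : k < K := by omega
      have ihk := ih (by omega)
      have hmemk : ∀ n, n ≤ t →
          (n ∈ bdS γ₁ γ₂ x M L q (k+1) ↔ n ∈ bdS γ₁ γ₂ x M L q' (k+1)) := by
        intro n hn
        show bdT γ₁ γ₂ x M L q k + L ≤ n ∧ bdCocycle γ₁ γ₂ q n x ≤ M ↔
          bdT γ₁ γ₂ x M L q' k + L ≤ n ∧ bdCocycle γ₁ γ₂ q' n x ≤ M
        rw [ihk.2 hkK, cocycle_local γ₁ γ₂ (fun i hi => hag i (by omega)) x]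
      refine ⟨hmemk, fun hK => ?_⟩
      rw [bdT_eq γ₁ γ₂ x M L q' (k+1)]
      exact sInf_transfer hmemk (by have := hA (k+1) hK; omega) (hTq (k+1) hK)
        (bdT_eq γ₁ γ₂ x M L q (k+1)).symm
  refine ⟨?_, ?_, ?_⟩
  · intro k hk
    constructor
    · exact ⟨bdT γ₁ γ₂ x M L q k,
        ((htrans k hk.le).1 _ (by have := hA k hk; omega)).1 (hTq k hk)⟩
    · rw [(htrans k hk.le).2 hk]
      intro hblk
      apply (hF k hk).2
      intro j hj
      rw [hag (bdT γ₁ γ₂ x M L q k + j) (by have := hA k hk; omega)]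
      exact hblk j hj
  · exact ((htrans K le_rfl).1 t le_rfl).1 hmem
  · intro n hn hc
    exact hmin n hn (((htrans K le_rfl).1 n hn.le).2 hc)

lemma bdC_disjoint (γ₁ γ₂ c : ℝ) (x M L K : ℕ) :
    Pairwise (Function.onFun Disjoint fun t => bdC γ₁ γ₂ c x M L K t) := by
  intro t t' htt'
  simp only [Function.onFun, Set.disjoint_left]
  rintro q ⟨_, hmem, hmin⟩ ⟨_, hmem', hmin'⟩
  rcases lt_or_gt_of_ne htt' with h | h
  · exact hmin' t h hmem
  · exact hmin t' h hmem'

lemma bdF_succ_subset (γ₁ γ₂ c : ℝ) (x M L K : ℕ) :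
    bdF γ₁ γ₂ c x M L (K+1) ⊆
      ⋃ t : ℕ, bdC γ₁ γ₂ c x M L K t ∩ {q | bdBlk c L t q}ᶜ := by
  intro q hq
  have hne : (bdS γ₁ γ₂ x M L q K).Nonempty := (hq K (by omega)).1
  refine Set.mem_iUnion.2 ⟨bdT γ₁ γ₂ x M L q K, ⟨⟨?_, ?_, ?_⟩, ?_⟩⟩
  · intro k hk
    exact hq k (by omega)
  · rw [bdT_eq γ₁ γ₂ x M L q K]
    exact Nat.sInf_mem hne
  · intro n hn
    rw [bdT_eq γ₁ γ₂ x M L q K] at hn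
    exact Nat.notMem_of_lt_sInf hn
  · exact (hq K (by omega)).2

/-! ### Independence tools -/

lemma indep_of_local {P : Measure (ℕ → ℝ)} [IsProbabilityMeasure P]
    (hIndep : iIndepFun (fun n (q : ℕ → ℝ) => q n) P)
    (t L : ℕ) {A B : Set (ℕ → ℝ)} (hA : MeasurableSet A) (hB : MeasurableSet B)
    (hAloc : ∀ q q' : ℕ → ℝ, (∀ i < t, q i = q' i) → q ∈ A → q' ∈ A)
    (hBloc : ∀ q q' : ℕ → ℝ, (∀ i, t ≤ i → i < t + L → q i = q' i) → q ∈ B → q' ∈ B) :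
    P (A ∩ B) = P A * P B := by
  classical
  set S : Finset ℕ := Finset.range t with hSdef
  set T : Finset ℕ := Finset.Ico t (t + L) with hTdef
  have hST : Disjoint S T := by
    rw [Finset.disjoint_left]
    intro i hiS hiT
    rw [hSdef, Finset.mem_range] at hiS
    rw [hTdef, Finset.mem_Ico] at hiT
    omega
  have hfg : IndepFun (fun q : ℕ → ℝ => fun i : S => q i)
      (fun q : ℕ → ℝ => fun i : T => q i) P :=
    hIndep.indepFun_finset S T hST fun i => measurable_pi_apply i
  set eS : (S → ℝ) → (ℕ → ℝ) := fun v i => if h : i ∈ S then v ⟨i, h⟩ else 0 with heS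
  set eT : (T → ℝ) → (ℕ → ℝ) := fun v i => if h : i ∈ T then v ⟨i, h⟩ else 0 with heT
  have hmeS : Measurable eS := by
    apply measurable_pi_lambda
    intro i
    by_cases h : i ∈ S
    · simpa only [heS, dif_pos h] using measurable_pi_apply (⟨i, h⟩ : S)
    · simpa only [heS, dif_neg h] using (measurable_const : Measurable fun _ : S → ℝ => (0:ℝ))
  have hmeT : Measurable eT := by
    apply measurable_pi_lambda
    intro i
    by_cases h : i ∈ T
    · simpa only [heT, dif_pos h] using measurable_pi_apply (⟨i, h⟩ : T)
    · simpa only [heT, dif_neg h] using (measurable_const : Measurable fun _ : T → ℝ => (0:ℝ))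
  have hAeq : A = (fun q : ℕ → ℝ => fun i : S => q i) ⁻¹' (eS ⁻¹' A) := by
    ext q
    simp only [Set.mem_preimage]
    have hagree : ∀ i < t, q i = eS (fun i : S => q i) i := by
      intro i hi
      have h : i ∈ S := by rw [hSdef, Finset.mem_range]; exact hi
      simp [heS, dif_pos h]
    exact ⟨fun h => hAloc q _ hagree h, fun h => hAloc _ q (fun i hi => (hagree i hi).symm) h⟩
  have hBeq : B = (fun q : ℕ → ℝ => fun i : T => q i) ⁻¹' (eT ⁻¹' B) := by
    ext q
    simp only [Set.mem_preimage]
    have hagree : ∀ i, t ≤ i → i < t + L → q i = eT (fun i : T => q i) i := by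
      intro i hi1 hi2
      have h : i ∈ T := by rw [hTdef, Finset.mem_Ico]; exact ⟨hi1, hi2⟩
      simp [heT, dif_pos h]
    exact ⟨fun h => hBloc q _ hagree h, fun h => hBloc _ q (fun i h1 h2 => (hagree i h1 h2).symm) h⟩
  rw [hAeq, hBeq, hfg.measure_inter_preimage_eq_mul _ _ (hmeS hA) (hmeT hB)]

lemma marginal {P : Measure (ℕ → ℝ)}
    (hUnif : ∀ n : ℕ, P.map (fun q => q n) = volume.restrict (Set.Icc (0 : ℝ) 1))
    (n : ℕ) {s : Set ℝ} (hs : MeasurableSet s) :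
    P ((fun q : ℕ → ℝ => q n) ⁻¹' s) = volume (s ∩ Set.Icc (0:ℝ) 1) := by
  rw [← Measure.map_apply (measurable_pi_apply n) hs, hUnif n, Measure.restrict_apply hs]

lemma measure_Blk {P : Measure (ℕ → ℝ)} [IsProbabilityMeasure P]
    (hIndep : iIndepFun (fun n (q : ℕ → ℝ) => q n) P)
    (hUnif : ∀ n : ℕ, P.map (fun q => q n) = volume.restrict (Set.Icc (0 : ℝ) 1))
    {c : ℝ} (hc0 : 0 ≤ c) (hc1 : c ≤ 1) (L t : ℕ) :
    P {q | bdBlk c L t q} = ENNReal.ofReal (1 - c) ^ L := by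
  have hmem : {q : ℕ → ℝ | bdBlk c L t q} =
      ⋂ i ∈ Finset.Ico t (t + L), (fun q : ℕ → ℝ => q i) ⁻¹' Set.Ico c 1 := by
    ext q
    simp only [bdBlk, Set.mem_setOf_eq, Set.mem_iInter, Finset.mem_Ico, Set.mem_preimage]
    constructor
    · rintro h i ⟨h1, h2⟩
      have := h (i - t) (by omega)
      rwa [Nat.add_sub_cancel' h1] at this
    · intro h j hj
      exact h (t + j) ⟨by omega, by omega⟩
  have hfac : ∀ i : ℕ, P ((fun q : ℕ → ℝ => q i) ⁻¹' Set.Ico c 1) = ENNReal.ofReal (1 - c) := by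
    intro i
    rw [marginal hUnif i measurableSet_Ico]
    have : Set.Ico c 1 ∩ Set.Icc (0:ℝ) 1 = Set.Ico c 1 := by
      apply Set.inter_eq_left.2
      intro r hr
      rw [Set.mem_Ico] at hr
      exact Set.mem_Icc.2 ⟨le_trans hc0 hr.1, hr.2.le⟩
    rw [this, Real.volume_Ico]
  rw [hmem, hIndep.measure_inter_preimage_eq_mul (Finset.Ico t (t + L))
    (fun i _ => measurableSet_Ico)]
  rw [Finset.prod_congr rfl fun i _ => hfac i, Finset.prod_const, Nat.card_Ico]
  congr 1
  omega

lemma bdF_bound {P : Measure (ℕ → ℝ)} [IsProbabilityMeasure P]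
    (hIndep : iIndepFun (fun n (q : ℕ → ℝ) => q n) P)
    (hUnif : ∀ n : ℕ, P.map (fun q => q n) = volume.restrict (Set.Icc (0 : ℝ) 1))
    (γ₁ γ₂ : ℝ) {c : ℝ} (hc0 : 0 ≤ c) (hc1 : c ≤ 1) (x M L : ℕ) (K : ℕ) :
    P (bdF γ₁ γ₂ c x M L K) ≤ (1 - ENNReal.ofReal (1 - c) ^ L) ^ K := by
  induction K with
  | zero =>
    have h : bdF γ₁ γ₂ c x M L 0 = Set.univ := by
      ext q; simp [bdF]
    rw [h, pow_zero]
    exact measure_univ.le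
  | succ K ih =>
    set r := 1 - ENNReal.ofReal (1 - c) ^ L with hr
    calc P (bdF γ₁ γ₂ c x M L (K+1))
        ≤ P (⋃ t : ℕ, bdC γ₁ γ₂ c x M L K t ∩ {q | bdBlk c L t q}ᶜ) :=
          measure_mono (bdF_succ_subset γ₁ γ₂ c x M L K)
      _ ≤ ∑' t : ℕ, P (bdC γ₁ γ₂ c x M L K t ∩ {q | bdBlk c L t q}ᶜ) := measure_iUnion_le _
      _ = ∑' t : ℕ, P (bdC γ₁ γ₂ c x M L K t) * r := by
          refine tsum_congr fun t => ?_
          rw [indep_of_local hIndep t L (measurableSet_C γ₁ γ₂ c x M L K t)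
            (measurableSet_Blk c L t).compl
            (fun q q' hag hq => bdC_local γ₁ γ₂ c x M L K t hag hq) ?_]
          · congr 1
            rw [measure_compl (measurableSet_Blk c L t) (measure_ne_top _ _), measure_univ,
              measure_Blk hIndep hUnif hc0 hc1 L t]
          · intro q q' hag hq hq'
            apply hq
            intro j hj
            rw [hag (t + j) (by omega) (by omega)]
            exact hq' j hj
      _ = (∑' t : ℕ, P (bdC γ₁ γ₂ c x M L K t)) * r := ENNReal.tsum_mul_right
      _ = P (⋃ t : ℕ, bdC γ₁ γ₂ c x M L K t) * r := by
          rw [measure_iUnion (bdC_disjoint γ₁ γ₂ c x M L K)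
            (fun t => measurableSet_C γ₁ γ₂ c x M L K t)]
      _ ≤ P (bdF γ₁ γ₂ c x M L K) * r :=
          by
          refine mul_le_mul_left (measure_mono (Set.iUnion_subset fun t => ?_)) r
          intro q hq
          exact hq.1
      _ ≤ r ^ K * r := mul_le_mul_left ih r
      _ = r ^ (K + 1) := (pow_succ r K).symm

lemma bdF_iInter_zero {P : Measure (ℕ → ℝ)} [IsProbabilityMeasure P]
    (hIndep : iIndepFun (fun n (q : ℕ → ℝ) => q n) P)
    (hUnif : ∀ n : ℕ, P.map (fun q => q n) = volume.restrict (Set.Icc (0 : ℝ) 1))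
    (γ₁ γ₂ : ℝ) {c : ℝ} (hc0 : 0 ≤ c) (hc1 : c < 1) (x M L : ℕ) :
    P (⋂ K : ℕ, bdF γ₁ γ₂ c x M L K) = 0 := by
  have hpow : (ENNReal.ofReal (1 - c)) ^ L ≠ 0 :=
    pow_ne_zero L (ENNReal.ofReal_pos.2 (by linarith)).ne'
  have hrlt : (1 - ENNReal.ofReal (1 - c) ^ L) < 1 :=
    ENNReal.sub_lt_self ENNReal.one_ne_top one_ne_zero hpow
  have htend := ENNReal.tendsto_pow_atTop_nhds_zero_of_lt_one hrlt
  refine le_antisymm (ge_of_tendsto' htend fun K => ?_) zero_le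
  exact le_trans (measure_mono (Set.iInter_subset _ K))
    (bdF_bound hIndep hUnif γ₁ γ₂ hc0 hc1.le x M L K)

/-! ### Law of large numbers for the small-noise counts -/

lemma count_small {P : Measure (ℕ → ℝ)} [IsProbabilityMeasure P]
    (hIndep : iIndepFun (fun n (q : ℕ → ℝ) => q n) P)
    (hUnif : ∀ n : ℕ, P.map (fun q => q n) = volume.restrict (Set.Icc (0 : ℝ) 1))
    {ε : ℝ} (hε0 : 0 ≤ ε) (hε1 : ε ≤ 1/5) :
    ∀ᵐ q ∂P, ∃ N, ∀ n ≥ N,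
      4 * ((Finset.range n).filter (fun k => q k < ε)).card ≤ n := by
  classical
  set g : ℝ → ℝ := fun r => if r < ε then 1 else 0 with hg
  have hgmeas : Measurable g :=
    Measurable.ite measurableSet_Iio measurable_const measurable_const
  set X : ℕ → (ℕ → ℝ) → ℝ := fun i q => g (q i) with hX
  have hXmeas : ∀ i, Measurable (X i) := fun i => hgmeas.comp (measurable_pi_apply i)
  have hA : MeasurableSet ((fun q : ℕ → ℝ => q 0) ⁻¹' Set.Iio ε) :=
    (measurable_pi_apply 0) measurableSet_Iio
  have hind : X 0 = Set.indicator ((fun q : ℕ → ℝ => q 0) ⁻¹' Set.Iio ε)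
      (fun _ => (1:ℝ)) := by
    funext q
    by_cases h : q 0 < ε <;>
      simp [hX, hg, h, Set.indicator_apply, Set.mem_preimage, Set.mem_Iio]
  have hint : Integrable (X 0) P := by
    rw [hind]
    exact (integrable_indicator_iff hA).2
      (integrableOn_const (measure_ne_top P _))
  have hindep : Pairwise (Function.onFun (IndepFun · · P) X) := fun i j hij =>
    (hIndep.indepFun hij).comp hgmeas hgmeas
  have hident : ∀ i, IdentDistrib (X i) (X 0) P P := by
    intro i
    have h0 : IdentDistrib (fun q : ℕ → ℝ => q i) (fun q : ℕ → ℝ => q 0) P P :=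
      ⟨(measurable_pi_apply i).aemeasurable, (measurable_pi_apply 0).aemeasurable,
        by rw [hUnif i, hUnif 0]⟩
    exact h0.comp hgmeas
  have hval : P[X 0] < 1/4 := by
    have h1 : Set.Iio ε ∩ Set.Icc (0:ℝ) 1 = Set.Ico 0 ε := by
      ext r
      simp only [Set.mem_inter_iff, Set.mem_Iio, Set.mem_Icc, Set.mem_Ico]
      constructor
      · rintro ⟨h1, h2, h3⟩; exact ⟨h2, h1⟩
      · rintro ⟨h1, h2⟩; exact ⟨h2, h1, by linarith⟩
    have h2 : P ((fun q : ℕ → ℝ => q 0) ⁻¹' Set.Iio ε) = ENNReal.ofReal ε := by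
      rw [marginal hUnif 0 measurableSet_Iio, h1, Real.volume_Ico, sub_zero]
    have h3 : P[X 0] = ε := by
      rw [hind]
      have := integral_indicator_one (μ := P) hA
      rw [show Set.indicator ((fun q : ℕ → ℝ => q 0) ⁻¹' Set.Iio ε) (fun _ => (1:ℝ))
        = Set.indicator ((fun q : ℕ → ℝ => q 0) ⁻¹' Set.Iio ε) 1 from rfl, this, measureReal_def, h2,
        ENNReal.toReal_ofReal hε0]
    rw [h3]
    linarith
  have hsll := strong_law_ae_real X hint hindep hident
  filter_upwards [hsll] with q hq
  have hev : ∀ᶠ n : ℕ in atTop, (∑ i ∈ Finset.range n, X i q) / n < 1/4 :=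
    hq.eventually_lt_const hval
  have hev2 : ∀ᶠ n : ℕ in atTop, 1 ≤ n := eventually_ge_atTop 1
  obtain ⟨N, hN⟩ := (hev.and hev2).exists_forall_of_atTop
  refine ⟨N, fun n hn => ?_⟩
  obtain ⟨h1, h2⟩ := hN n hn
  have hsum : (∑ i ∈ Finset.range n, X i q) =
      ((Finset.range n).filter (fun k => q k < ε)).card := by
    simp [hX, hg]
  rw [hsum] at h1
  have hn0 : (0:ℝ) < n := by exact_mod_cast h2
  rw [div_lt_iff₀ hn0] at h1
  have : (4 * ((Finset.range n).filter (fun k => q k < ε)).card : ℝ) < n := by linarith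
  exact_mod_cast this.le

/-! ### Main lemma -/

lemma key {γ₁ γ₂ : ℝ} (hγ₁ : 0 < γ₁) (hγ₂ : 0 < γ₂)
    (P : Measure (ℕ → ℝ)) [IsProbabilityMeasure P]
    (hIndep : iIndepFun (fun n (q : ℕ → ℝ) => q n) P)
    (hUnif : ∀ n : ℕ, P.map (fun q => q n) = volume.restrict (Set.Icc (0 : ℝ) 1))
    (x y : ℕ) (hxy : x ≤ y) (hpar : x % 2 = y % 2) :
    ∀ᵐ q ∂P, ∃ n₀ : ℕ, ∀ n ≥ n₀, bdCocycle γ₁ γ₂ q n x = bdCocycle γ₁ γ₂ q n y := by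
  classical
  set M : ℕ := ⌈4 * γ₁ / γ₂⌉₊ with hM
  have hMge : 4 * γ₁ ≤ γ₂ * M := by
    have h1 : 4 * γ₁ / γ₂ ≤ (M : ℝ) := Nat.le_ceil _
    calc 4 * γ₁ = γ₂ * (4 * γ₁ / γ₂) := by field_simp
      _ ≤ γ₂ * M := by nlinarith
  have hε0 : 0 ≤ thr γ₁ γ₂ M := (thr_pos hγ₁ hγ₂ M).le
  have hε1 : thr γ₁ γ₂ M ≤ 1/5 := by
    have h5 : (0:ℝ) < 5 * γ₁ := by linarith
    have h2 : 5 * γ₁ ≤ γ₁ + γ₂ * M := by linarith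
    calc thr γ₁ γ₂ M ≤ γ₁ / (5 * γ₁) := div_le_div_of_nonneg_left hγ₁.le h5 h2
      _ = 1/5 := by field_simp
  set c : ℝ := thr γ₁ γ₂ 1 with hc
  have hc0 : 0 ≤ c := (thr_pos hγ₁ hγ₂ 1).le
  have hc1 : c < 1 := by
    rw [hc, thr]
    rw [div_lt_one (thr_denom_pos hγ₁ hγ₂ 1)]
    simp only [Nat.cast_one, mul_one]
    linarith
  set L : ℕ := M + (y - x) with hL
  -- a.e. events
  have hae1 : ∀ᵐ q ∂P, ∀ n : ℕ, q n < 1 := by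
    rw [ae_all_iff]
    intro n
    rw [ae_iff]
    have h1 : {q : ℕ → ℝ | ¬ q n < 1} = (fun q : ℕ → ℝ => q n) ⁻¹' Set.Ici 1 := by
      ext q; simp [not_lt]
    rw [h1, marginal hUnif n measurableSet_Ici]
    have h2 : Set.Ici (1:ℝ) ∩ Set.Icc 0 1 = {1} := by
      ext r
      simp only [Set.mem_inter_iff, Set.mem_Ici, Set.mem_Icc, Set.mem_singleton_iff]
      constructor
      · rintro ⟨ha, _, hb⟩; linarith
      · rintro rfl; norm_num
    rw [h2, Real.volume_singleton]
  have hae2 := count_small hIndep hUnif hε0 hε1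
  have hae3 : ∀ᵐ q ∂P, q ∉ ⋂ K : ℕ, bdF γ₁ γ₂ c x M L K :=
    measure_eq_zero_iff_ae_notMem.1 (bdF_iInter_zero hIndep hUnif γ₁ γ₂ hc0 hc1 x M L)
  filter_upwards [hae1, hae2, hae3] with q hq1 hq2 hq3
  obtain ⟨N, hN⟩ := hq2
  have hrec : ∀ n0, ∃ n ≥ n0, bdCocycle γ₁ γ₂ q n x ≤ M := recurrence hγ₁ hγ₂ hN x
  have hSne : ∀ k, (bdS γ₁ γ₂ x M L q k).Nonempty := by
    intro k
    cases k with
    | zero =>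
      obtain ⟨n, _, hn⟩ := hrec 0
      exact ⟨n, hn⟩
    | succ k =>
      obtain ⟨n, hn1, hn2⟩ := hrec (bdT γ₁ γ₂ x M L q k + L)
      exact ⟨n, hn1, hn2⟩
  rw [Set.mem_iInter] at hq3
  push_neg at hq3
  obtain ⟨K, hK⟩ := hq3
  have hK' : ¬ ∀ k < K, (bdS γ₁ γ₂ x M L q k).Nonempty ∧
      ¬ bdBlk c L (bdT γ₁ γ₂ x M L q k) q := hK
  push_neg at hK'
  obtain ⟨k, hkK, hk⟩ := hK'
  have hblk : bdBlk c L (bdT γ₁ γ₂ x M L q k) q := hk (hSne k)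
  set t := bdT γ₁ γ₂ x M L q k with ht
  have hmemt : t ∈ bdS γ₁ γ₂ x M L q k := by
    rw [ht, bdT_eq γ₁ γ₂ x M L q k]
    exact Nat.sInf_mem (hSne k)
  have hxt : bdCocycle γ₁ γ₂ q t x ≤ M := by
    cases k with
    | zero => exact hmemt
    | succ k => exact hmemt.2
  have hcpl := cocycle_couple hγ₁ hγ₂ hq1 hxy hpar t
  have hxt' : bdCocycle γ₁ γ₂ q t x ≤ L := by omega
  have hyt : bdCocycle γ₁ γ₂ q t y ≤ L := by omega
  have hblk' : ∀ j < L, thr γ₁ γ₂ 1 ≤ q (t + j) := fun j hj => (hblk j hj).1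
  have hmerge := cocycle_merge hγ₁ hγ₂ hq1 hblk' hxt' hyt hcpl.2.2
  exact ⟨t + L, fun n hn => cocycle_eq_of_eq hmerge n hn⟩

end BD

/-- Partial synchronization of the embedded birth-death chain with respect to the parity
partition `{W₀, W₁}` of `ℕ`: if the initial states `x` and `y` have the same parity (both in
`W₀`, the even numbers, or both in `W₁`, the odd numbers), then for almost every noise
realization `q` the two trajectories coincide from some time `n₀` on. -/
theorem stmt4 (γ₁ γ₂ : ℝ) (hγ₁ : 0 < γ₁) (hγ₂ : 0 < γ₂)
    (P : Measure (ℕ → ℝ)) [IsProbabilityMeasure P]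
    (hIndep : iIndepFun (fun n (q : ℕ → ℝ) => q n) P)
    (hUnif : ∀ n : ℕ, P.map (fun q => q n) = volume.restrict (Set.Icc (0 : ℝ) 1))
    (x y : ℕ) (hpar : x % 2 = y % 2) :
    ∀ᵐ q ∂P, ∃ n₀ : ℕ, ∀ n ≥ n₀, bdCocycle γ₁ γ₂ q n x = bdCocycle γ₁ γ₂ q n y := by
  rcases le_total x y with hxy | hxy
  · exact BD.key hγ₁ hγ₂ P hIndep hUnif x y hxy hpar
  · filter_upwards [BD.key hγ₁ hγ₂ P hIndep hUnif y x hxy hpar.symm] with q hq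
    obtain ⟨n₀, hn₀⟩ := hq
    exact ⟨n₀, fun n hn => (hn₀ n hn).symm⟩
end

section
/- If x, y ∈ ℕ have odd difference x − y, then for ℙ-a.e. q ∈ Q₊ the birth-death trajectories never coincide, i.e. φⁿ_q(x) ≠ φⁿ_q(y) for all n ∈ ℕ, and moreover there exists n₀ such that |φⁿ_q(x) − φⁿ_q(y)| = 1 for all n ≥ n₀. -/
open MeasureTheory ProbabilityTheory Filter

namespace BDAux

variable {γ₁ γ₂ : ℝ}

lemma bdCocycle_succ (q : ℕ → ℝ) (n z : ℕ) :
    bdCocycle γ₁ γ₂ q (n + 1) z = bdStep γ₁ γ₂ (q n) (bdCocycle γ₁ γ₂ q n z) := rfl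

lemma denom_pos (hγ₁ : 0 < γ₁) (hγ₂ : 0 < γ₂) (s : ℕ) : 0 < γ₁ + γ₂ * (s : ℝ) :=
  add_pos_of_pos_of_nonneg hγ₁ (mul_nonneg hγ₂.le (Nat.cast_nonneg s))

lemma thresh_zero (hγ₁ : 0 < γ₁) : γ₁ / (γ₁ + γ₂ * ((0 : ℕ) : ℝ)) = 1 := by
  simp [div_self hγ₁.ne']

lemma thresh_anti (hγ₁ : 0 < γ₁) (hγ₂ : 0 < γ₂) {a b : ℕ} (hab : a ≤ b) :
    γ₁ / (γ₁ + γ₂ * (b : ℝ)) ≤ γ₁ / (γ₁ + γ₂ * (a : ℝ)) := by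
  have h : (a : ℝ) ≤ b := Nat.cast_le.2 hab
  apply div_le_div_of_nonneg_left hγ₁.le (denom_pos hγ₁ hγ₂ a)
  nlinarith

lemma thresh_small (hγ₁ : 0 < γ₁) (hγ₂ : 0 < γ₂) {m₀ v : ℕ} (hm : 2 * γ₁ ≤ γ₂ * m₀)
    (hv : m₀ ≤ v) : γ₁ / (γ₁ + γ₂ * (v : ℝ)) ≤ 3⁻¹ := by
  have h : (m₀ : ℝ) ≤ v := Nat.cast_le.2 hv
  rw [div_le_iff₀ (denom_pos hγ₁ hγ₂ v)]
  nlinarith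

lemma bdStep_cases (hγ₁ : 0 < γ₁) (hγ₂ : 0 < γ₂) {q : ℝ} (hq : q < 1) (s : ℕ) :
    (q < γ₁ / (γ₁ + γ₂ * s) ∧ bdStep γ₁ γ₂ q s = s + 1) ∨
    (¬ q < γ₁ / (γ₁ + γ₂ * s) ∧ 1 ≤ s ∧ bdStep γ₁ γ₂ q s = s - 1) := by
  by_cases h : q < γ₁ / (γ₁ + γ₂ * s)
  · exact Or.inl ⟨h, if_pos h⟩
  · refine Or.inr ⟨h, ?_, if_neg h⟩
    rcases Nat.eq_zero_or_pos s with rfl | hs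
    · exact absurd (by rwa [thresh_zero hγ₁]) h
    · exact hs

lemma bdStep_pair (hγ₁ : 0 < γ₁) (hγ₂ : 0 < γ₂) {q : ℝ} (hq : q < 1) {a b : ℕ} (hab : b ≤ a) :
    ((bdStep γ₁ γ₂ q a : ℤ) - bdStep γ₁ γ₂ q b = (a : ℤ) - b) ∨
    ((bdStep γ₁ γ₂ q a : ℤ) - bdStep γ₁ γ₂ q b = (a : ℤ) - b - 2) := by
  rcases bdStep_cases hγ₁ hγ₂ hq a with ⟨ha, ha'⟩ | ⟨ha, ha1, ha'⟩ <;>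
    rcases bdStep_cases hγ₁ hγ₂ hq b with ⟨hb, hb'⟩ | ⟨hb, hb1, hb'⟩
  · left; rw [ha', hb']; push_cast; ring
  · exact absurd (lt_of_lt_of_le ha (thresh_anti hγ₁ hγ₂ hab)) hb
  · right; rw [ha', hb']; omega
  · left; rw [ha', hb']; omega

lemma bdStep_parity (hγ₁ : 0 < γ₁) (hγ₂ : 0 < γ₂) {q : ℝ} (hq : q < 1) (a b : ℕ) :
    ∃ k : ℤ, (bdStep γ₁ γ₂ q a : ℤ) - bdStep γ₁ γ₂ q b = (a : ℤ) - b + 2 * k := by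
  rcases le_total b a with h | h
  · rcases bdStep_pair hγ₁ hγ₂ hq h with h' | h'
    · exact ⟨0, by omega⟩
    · exact ⟨-1, by omega⟩
  · rcases bdStep_pair hγ₁ hγ₂ hq h with h' | h'
    · exact ⟨0, by omega⟩
    · exact ⟨1, by omega⟩

lemma bdStep_abs (hγ₁ : 0 < γ₁) (hγ₂ : 0 < γ₂) {q : ℝ} (hq : q < 1) (a b : ℕ) :
    |(bdStep γ₁ γ₂ q a : ℤ) - bdStep γ₁ γ₂ q b| ≤ |(a : ℤ) - b| := by
  rcases eq_or_ne a b with rfl | hne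
  · simp
  have key : ∀ a b : ℕ, b < a →
      |(bdStep γ₁ γ₂ q a : ℤ) - bdStep γ₁ γ₂ q b| ≤ |(a : ℤ) - b| := by
    intro a b hba
    rcases bdStep_pair hγ₁ hγ₂ hq hba.le with h' | h' <;>
    · rw [abs_of_nonneg (by omega : (0 : ℤ) ≤ (a : ℤ) - b), abs_le]
      omega
  rcases lt_or_gt_of_ne hne with h | h
  · rw [abs_sub_comm, abs_sub_comm (a : ℤ)]
    exact key b a h
  · exact key a b h

lemma cocycle_odd (hγ₁ : 0 < γ₁) (hγ₂ : 0 < γ₂) {q : ℕ → ℝ} (hW : ∀ n, q n < 1) {x y : ℕ}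
    (hodd : Odd ((x : ℤ) - (y : ℤ))) (n : ℕ) :
    Odd ((bdCocycle γ₁ γ₂ q n x : ℤ) - bdCocycle γ₁ γ₂ q n y) := by
  induction n with
  | zero => exact hodd
  | succ n ih =>
    obtain ⟨k, hk⟩ := bdStep_parity hγ₁ hγ₂ (hW n) (bdCocycle γ₁ γ₂ q n x)
      (bdCocycle γ₁ γ₂ q n y)
    obtain ⟨m, hm⟩ := ih
    exact ⟨m + k, by rw [bdCocycle_succ, bdCocycle_succ, hk, hm]; ring⟩

lemma cocycle_abs_le (hγ₁ : 0 < γ₁) (hγ₂ : 0 < γ₂) {q : ℕ → ℝ} (hW : ∀ n, q n < 1) (x y : ℕ)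
    (n k : ℕ) :
    |(bdCocycle γ₁ γ₂ q (n + k) x : ℤ) - bdCocycle γ₁ γ₂ q (n + k) y| ≤
      |(bdCocycle γ₁ γ₂ q n x : ℤ) - bdCocycle γ₁ γ₂ q n y| := by
  induction k with
  | zero => exact le_rfl
  | succ k ih =>
    refine le_trans ?_ ih
    rw [show n + (k + 1) = (n + k) + 1 from rfl, bdCocycle_succ, bdCocycle_succ]
    exact bdStep_abs hγ₁ hγ₂ (hW (n + k)) _ _

/-- during a run of noise values in `[γ₁/(γ₁+γ₂), 1)`, states decrease until they hit `{0,1}`. -/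
lemma run_lemma (hγ₁ : 0 < γ₁) (hγ₂ : 0 < γ₂) {q : ℕ → ℝ} {n k S : ℕ}
    (hq : ∀ j, n ≤ j → j < n + k → γ₁ / (γ₁ + γ₂) ≤ q j ∧ q j < 1) {z : ℕ}
    (hz : bdCocycle γ₁ γ₂ q n z ≤ S) :
    ∀ j, j ≤ k → bdCocycle γ₁ γ₂ q (n + j) z ≤ max (S - j) 1 := by
  intro j hj
  induction j with
  | zero => simpa using le_trans hz (le_max_left _ _)
  | succ j ih =>
    have ihj := ih (by omega)
    have hqj := hq (n + j) (by omega) (by omega)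
    rw [show n + (j + 1) = (n + j) + 1 from rfl, bdCocycle_succ]
    set v := bdCocycle γ₁ γ₂ q (n + j) z with hv
    rcases Nat.eq_zero_or_pos v with hv0 | hv1
    · have : bdStep γ₁ γ₂ (q (n + j)) v = v + 1 := by
        apply if_pos
        rw [hv0]
        rw [show γ₁ + γ₂ * ((0 : ℕ) : ℝ) = γ₁ by push_cast; ring, div_self hγ₁.ne']
        exact hqj.2
      rw [this, hv0]
      exact le_max_right _ _
    · have hth : γ₁ / (γ₁ + γ₂ * (v : ℝ)) ≤ γ₁ / (γ₁ + γ₂) := by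
        have := thresh_anti hγ₁ hγ₂ hv1
        simpa using this
      have : bdStep γ₁ γ₂ (q (n + j)) v = v - 1 := by
        apply if_neg
        push_neg
        exact le_trans hth hqj.1
      rw [this]
      omega

/-- while the trajectory stays above `m₀`, it is dominated by a ±1 walk driven by the
events `q i < 1/3`. -/
lemma walk_bound (hγ₁ : 0 < γ₁) (hγ₂ : 0 < γ₂) {q : ℕ → ℝ} {m₀ : ℕ}
    (hm₀ : 2 * γ₁ ≤ γ₂ * m₀) {y N : ℕ}
    (hY : ∀ j, N ≤ j → m₀ < bdCocycle γ₁ γ₂ q j y) (k : ℕ) :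
    (bdCocycle γ₁ γ₂ q (N + k) y : ℝ) ≤ (bdCocycle γ₁ γ₂ q N y : ℝ) +
      ((∑ i ∈ Finset.range (N + k), (if q i < 3⁻¹ then (1 : ℝ) else -1)) -
        ∑ i ∈ Finset.range N, (if q i < 3⁻¹ then (1 : ℝ) else -1)) := by
  induction k with
  | zero => simp
  | succ k ih =>
    have hvm : m₀ < bdCocycle γ₁ γ₂ q (N + k) y := hY (N + k) (by omega)
    set v := bdCocycle γ₁ γ₂ q (N + k) y with hv
    rw [show N + (k + 1) = (N + k) + 1 from rfl, bdCocycle_succ, ← hv,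
      show N + k + 1 = (N + k) + 1 from rfl, Finset.sum_range_succ]
    by_cases hup : q (N + k) < γ₁ / (γ₁ + γ₂ * (v : ℝ))
    · have hq3 : q (N + k) < 3⁻¹ :=
        lt_of_lt_of_le hup (thresh_small hγ₁ hγ₂ hm₀ (by omega))
      rw [bdStep, if_pos hup, if_pos hq3]
      push_cast
      linarith
    · have hr : (-1 : ℝ) ≤ (if q (N + k) < 3⁻¹ then (1 : ℝ) else -1) := by
        split_ifs <;> norm_num
      rw [bdStep, if_neg hup]
      have hv1 : 1 ≤ v := by omega
      have : ((v - 1 : ℕ) : ℝ) = (v : ℝ) - 1 := by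
        push_cast [hv1]; ring
      rw [this]
      linarith

lemma recurrence (hγ₁ : 0 < γ₁) (hγ₂ : 0 < γ₂) {q : ℕ → ℝ} {m₀ : ℕ}
    (hm₀ : 2 * γ₁ ≤ γ₂ * m₀) {y : ℕ}
    (hZ : Tendsto (fun n => ∑ i ∈ Finset.range n, (if q i < 3⁻¹ then (1 : ℝ) else -1))
      atTop atBot) (N : ℕ) :
    ∃ n, N ≤ n ∧ bdCocycle γ₁ γ₂ q n y ≤ m₀ := by
  by_contra h
  push_neg at h
  have hY : ∀ j, N ≤ j → m₀ < bdCocycle γ₁ γ₂ q j y := fun j hj => h j hj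
  set Z : ℕ → ℝ := fun n => ∑ i ∈ Finset.range n, (if q i < 3⁻¹ then (1 : ℝ) else -1) with hZdef
  have hlow : ∀ k, Z N - (bdCocycle γ₁ γ₂ q N y : ℝ) ≤ Z (N + k) := by
    intro k
    have h1 : (bdCocycle γ₁ γ₂ q (N + k) y : ℝ) ≤ (bdCocycle γ₁ γ₂ q N y : ℝ) +
        (Z (N + k) - Z N) := walk_bound hγ₁ hγ₂ hm₀ hY k
    have h2 : (0 : ℝ) ≤ (bdCocycle γ₁ γ₂ q (N + k) y : ℝ) := Nat.cast_nonneg _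
    linarith
  obtain ⟨n₀, hn₀⟩ := (hZ.eventually
    (eventually_le_atBot (Z N - (bdCocycle γ₁ γ₂ q N y : ℝ) - 1))).exists_forall_of_atTop
  have := hlow (max n₀ N + N - N)
  have h3 := hn₀ (max n₀ N + N) (by omega)
  have h4 : N + (max n₀ N + N - N) = max n₀ N + N := by omega
  rw [h4] at this
  linarith

open scoped Topology in
/-- If the average of the walk tends to `-1/3`, the walk tends to `-∞`. -/
lemma walk_atBot {u : ℕ → ℝ} (h : Tendsto (fun n => u n / (n : ℝ)) atTop (𝓝 (-(1/3)))) :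
    Tendsto u atTop atBot := by
  have h6 : ∀ᶠ n : ℕ in atTop, u n / (n : ℝ) < -(1/6) := h.eventually_lt_const (by norm_num)
  have hv : Tendsto (fun n : ℕ => -(1/6) * (n : ℝ)) atTop atBot :=
    tendsto_natCast_atTop_atTop.const_mul_atTop_of_neg (by norm_num)
  refine tendsto_atBot_mono' atTop ?_ hv
  filter_upwards [h6, eventually_ge_atTop 1] with n hn hn1
  have hnpos : (0 : ℝ) < n := by exact_mod_cast hn1
  have := (div_lt_iff₀ hnpos).1 hn
  linarith

/-- measurability of the cocycle with respect to any σ-algebra making the relevant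
coordinates measurable. -/
lemma bdCocycle_measurable (γ₁ γ₂ : ℝ) {m' : MeasurableSpace (ℕ → ℝ)} (k : ℕ)
    (hm : ∀ j, j < k → Measurable[m'] (fun q : ℕ → ℝ => q j)) (z : ℕ) :
    Measurable[m'] (fun q => bdCocycle γ₁ γ₂ q k z) := by
  induction k with
  | zero => exact measurable_const
  | succ n ih =>
    have hC : Measurable[m'] (fun q => bdCocycle γ₁ γ₂ q n z) :=
      ih (fun j hj => hm j (by omega))
    have hqn : Measurable[m'] (fun q : ℕ → ℝ => q n) := hm n (by omega)
    have hth : Measurable[m'] (fun q => γ₁ / (γ₁ + γ₂ * (bdCocycle γ₁ γ₂ q n z : ℝ))) :=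
      (measurable_from_top (f := fun s : ℕ => γ₁ / (γ₁ + γ₂ * (s : ℝ)))).comp hC
    have hset : MeasurableSet[m']
        {q : ℕ → ℝ | q n < γ₁ / (γ₁ + γ₂ * (bdCocycle γ₁ γ₂ q n z : ℝ))} :=
      measurableSet_lt hqn hth
    show Measurable[m'] fun q => bdStep γ₁ γ₂ (q n) (bdCocycle γ₁ γ₂ q n z)
    simp only [bdStep]
    exact Measurable.ite hset ((measurable_from_top (f := fun s : ℕ => s + 1)).comp hC)
      ((measurable_from_top (f := fun s : ℕ => s - 1)).comp hC)

/-- The deterministic core: on a full run, the trajectories lock at distance 1. -/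
lemma main_incl (hγ₁ : 0 < γ₁) (hγ₂ : 0 < γ₂) {q : ℕ → ℝ} (hW : ∀ n, q n < 1) {x y : ℕ}
    (hodd : Odd ((x : ℤ) - (y : ℤ))) {n M : ℕ}
    (hGx : bdCocycle γ₁ γ₂ q (n + 1) x ≤ M) (hGy : bdCocycle γ₁ γ₂ q (n + 1) y ≤ M)
    (hB : ∀ j, n + 1 ≤ j → j < n + 1 + M → γ₁ / (γ₁ + γ₂) ≤ q j ∧ q j < 1) :
    (∀ k, bdCocycle γ₁ γ₂ q k x ≠ bdCocycle γ₁ γ₂ q k y) ∧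
    ∃ n₀ : ℕ, ∀ k ≥ n₀, |(bdCocycle γ₁ γ₂ q k x : ℤ) - (bdCocycle γ₁ γ₂ q k y : ℤ)| = 1 := by
  have hoddall := cocycle_odd hγ₁ hγ₂ hW hodd
  constructor
  · intro k hk
    obtain ⟨m, hm⟩ := hoddall k
    omega
  · refine ⟨n + 1 + M, fun k hk => ?_⟩
    have hXr := run_lemma hγ₁ hγ₂ hB hGx M le_rfl
    have hYr := run_lemma hγ₁ hγ₂ hB hGy M le_rfl
    have hX1 : bdCocycle γ₁ γ₂ q (n + 1 + M) x ≤ 1 := by omega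
    have hY1 : bdCocycle γ₁ γ₂ q (n + 1 + M) y ≤ 1 := by omega
    have habs : |(bdCocycle γ₁ γ₂ q k x : ℤ) - bdCocycle γ₁ γ₂ q k y| ≤ 1 := by
      have h1 := cocycle_abs_le hγ₁ hγ₂ hW x y (n + 1 + M) (k - (n + 1 + M))
      rw [show n + 1 + M + (k - (n + 1 + M)) = k by omega] at h1
      refine le_trans h1 ?_
      rw [abs_le]
      omega
    obtain ⟨m, hm⟩ := hoddall k
    rw [abs_le] at habs
    rw [hm]
    rcases abs_cases ((2 : ℤ) * m + 1) with ⟨h, _⟩ | ⟨h, _⟩ <;> omega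

end BDAux

open BDAux

/-- If the initial states `x` and `y` have odd difference, then for almost every noise
realization the two birth-death trajectories never coincide, and moreover from some time `n₀`
on they oscillate at distance exactly `1` from each other. -/
theorem stmt5 (γ₁ γ₂ : ℝ) (hγ₁ : 0 < γ₁) (hγ₂ : 0 < γ₂)
    (P : Measure (ℕ → ℝ)) [IsProbabilityMeasure P]
    (hIndep : iIndepFun (fun n (q : ℕ → ℝ) => q n) P)
    (hUnif : ∀ n : ℕ, P.map (fun q => q n) = volume.restrict (Set.Icc (0 : ℝ) 1))
    (x y : ℕ) (hodd : Odd ((x : ℤ) - (y : ℤ))) :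
    ∀ᵐ q ∂P, (∀ n : ℕ, bdCocycle γ₁ γ₂ q n x ≠ bdCocycle γ₁ γ₂ q n y) ∧
      ∃ n₀ : ℕ, ∀ n ≥ n₀,
        |(bdCocycle γ₁ γ₂ q n x : ℤ) - (bdCocycle γ₁ γ₂ q n y : ℤ)| = 1 := by
  classical
  have hγ12 : 0 < γ₁ + γ₂ := by linarith
  set c : ℝ := γ₁ / (γ₁ + γ₂) with hcdef
  have hc0 : 0 < c := div_pos hγ₁ hγ12
  have hc1 : c < 1 := (div_lt_one hγ12).2 (by linarith)
  set m₀ : ℕ := ⌈2 * γ₁ / γ₂⌉₊ with hm₀def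
  have hm₀ : 2 * γ₁ ≤ γ₂ * m₀ := by
    have h := Nat.le_ceil (2 * γ₁ / γ₂)
    rw [div_le_iff₀ hγ₂] at h
    linarith
  set M : ℕ := m₀ + x + y with hMdef
  -- the target set
  set A : Set (ℕ → ℝ) := {q | (∀ n, bdCocycle γ₁ γ₂ q n x ≠ bdCocycle γ₁ γ₂ q n y) ∧
      ∃ n₀ : ℕ, ∀ n ≥ n₀,
        |(bdCocycle γ₁ γ₂ q n x : ℤ) - (bdCocycle γ₁ γ₂ q n y : ℤ)| = 1} with hAdef
  -- measurability of A
  have hAmeas : ∀ (m' : MeasurableSpace (ℕ → ℝ)),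
      (∀ j, Measurable[m'] (fun q : ℕ → ℝ => q j)) → MeasurableSet[m'] A := by
    intro m' hm'
    have hpair : ∀ n, Measurable[m']
        (fun q => (bdCocycle γ₁ γ₂ q n x, bdCocycle γ₁ γ₂ q n y)) := fun n =>
      (bdCocycle_measurable γ₁ γ₂ n (fun j _ => hm' j) x).prodMk
        (bdCocycle_measurable γ₁ γ₂ n (fun j _ => hm' j) y)
    have hA' : A = (⋂ n, (fun q => (bdCocycle γ₁ γ₂ q n x, bdCocycle γ₁ γ₂ q n y)) ⁻¹'
          {p : ℕ × ℕ | p.1 ≠ p.2}) ∩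
        (⋃ n₀, ⋂ n, ⋂ (_ : n ≥ n₀),
          (fun q => (bdCocycle γ₁ γ₂ q n x, bdCocycle γ₁ γ₂ q n y)) ⁻¹'
            {p : ℕ × ℕ | |(p.1 : ℤ) - p.2| = 1}) := by
      ext q
      simp only [hAdef, Set.mem_setOf_eq, Set.mem_inter_iff, Set.mem_iInter, Set.mem_iUnion,
        Set.mem_preimage]
    rw [hA']
    refine MeasurableSet.inter ?_ ?_
    · exact MeasurableSet.iInter fun n =>
        (hpair n) ((Set.to_countable _).measurableSet)
    · exact MeasurableSet.iUnion fun n₀ => MeasurableSet.iInter fun n =>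
        MeasurableSet.iInter fun _ => (hpair n) ((Set.to_countable _).measurableSet)
  -- almost surely all coordinates are < 1
  have hW : ∀ᵐ q ∂P, ∀ n, q n < 1 := by
    rw [ae_all_iff]
    intro n
    rw [ae_iff]
    have hset : {q : ℕ → ℝ | ¬ q n < 1} = (fun q : ℕ → ℝ => q n) ⁻¹' (Set.Ici 1) := by
      ext q; simp [Set.mem_Ici, not_lt]
    rw [hset, ← Measure.map_apply (measurable_pi_apply n) measurableSet_Ici, hUnif n,
      Measure.restrict_apply measurableSet_Ici]
    have : Set.Ici (1 : ℝ) ∩ Set.Icc 0 1 = {1} := by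
      ext r
      simp only [Set.mem_inter_iff, Set.mem_Ici, Set.mem_Icc, Set.mem_singleton_iff]
      constructor
      · rintro ⟨h1, _, h2⟩; linarith
      · rintro rfl; norm_num
    rw [this]
    exact measure_singleton 1
  -- the SLLN walk
  set R : ℕ → (ℕ → ℝ) → ℝ := fun i q => if q i < 3⁻¹ then (1 : ℝ) else -1 with hRdef
  have hg : Measurable (fun r : ℝ => if r < 3⁻¹ then (1 : ℝ) else -1) :=
    Measurable.ite measurableSet_Iio measurable_const measurable_const
  have hRmeas : ∀ i, Measurable (R i) := fun i => hg.comp (measurable_pi_apply i)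
  have hRint : Integrable (R 0) P := by
    refine Integrable.mono' (integrable_const 1) ((hRmeas 0).aestronglyMeasurable) ?_
    filter_upwards with q
    rw [hRdef]
    simp only [Real.norm_eq_abs]
    split_ifs <;> norm_num
  have hRpair : Pairwise (Function.onFun (IndepFun · · P) R) := by
    intro i j hij
    exact (hIndep.indepFun hij).comp hg hg
  have hRident : ∀ i, IdentDistrib (R i) (R 0) P P := by
    intro i
    have h0 : IdentDistrib (fun q : ℕ → ℝ => q i) (fun q : ℕ → ℝ => q 0) P P :=
      ⟨(measurable_pi_apply i).aemeasurable, (measurable_pi_apply 0).aemeasurable,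
        by rw [hUnif i, hUnif 0]⟩
    exact h0.comp hg
  have hPIcc : IsProbabilityMeasure (volume.restrict (Set.Icc (0 : ℝ) 1)) := by
    constructor
    simp [Real.volume_Icc]
  have hmean : P[R 0] = -(1/3) := by
    have h1 : P[R 0] = ∫ r, (if r < 3⁻¹ then (1 : ℝ) else -1) ∂(P.map (fun q : ℕ → ℝ => q 0)) := by
      rw [integral_map (measurable_pi_apply 0).aemeasurable hg.aestronglyMeasurable]
    rw [h1, hUnif 0]
    have heq : (fun r : ℝ => if r < 3⁻¹ then (1 : ℝ) else -1) =
        fun r => (Set.Iio (3⁻¹ : ℝ)).indicator (fun _ => (2 : ℝ)) r + (-1) := by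
      ext r
      by_cases h : r < 3⁻¹ <;> simp [Set.indicator_apply, Set.mem_Iio, h] <;> norm_num
    rw [heq]
    rw [integral_add ((integrable_const (2 : ℝ)).indicator measurableSet_Iio)
      (integrable_const (-1 : ℝ))]
    rw [integral_indicator_const _ measurableSet_Iio, integral_const]
    show ((volume.restrict (Set.Icc (0:ℝ) 1)) (Set.Iio 3⁻¹)).toReal • (2:ℝ) +
      ((volume.restrict (Set.Icc (0:ℝ) 1)) Set.univ).toReal • (-1:ℝ) = -(1/3)
    rw [Measure.restrict_apply measurableSet_Iio]
    have hs : Set.Iio (3⁻¹ : ℝ) ∩ Set.Icc 0 1 = Set.Ico 0 3⁻¹ := by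
      ext r
      simp only [Set.mem_inter_iff, Set.mem_Iio, Set.mem_Icc, Set.mem_Ico]
      constructor
      · rintro ⟨h1, h2, h3⟩; exact ⟨h2, h1⟩
      · rintro ⟨h1, h2⟩; refine ⟨h2, h1, by norm_num at h2 ⊢; linarith⟩
    rw [hs, Real.volume_Ico]
    simp only [measure_univ]
    rw [ENNReal.toReal_ofReal (by norm_num)]
    norm_num
  have hSLLN := strong_law_ae_real R hRint hRpair hRident
  rw [hmean] at hSLLN
  -- the filtration
  set f : ℕ → (ℕ → ℝ) → ℝ := fun i q => q i with hfdef
  have hfmeas : ∀ i, StronglyMeasurable (f i) := fun i =>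
    (measurable_pi_apply i).stronglyMeasurable
  set ℱ := Filtration.natural f hfmeas with hℱdef
  have hcoordℱ : ∀ j n, j ≤ n → Measurable[ℱ n] (f j) := by
    intro j n hj
    have hle : MeasurableSpace.comap (f j) inferInstance ≤ ℱ n := by
      rw [hℱdef]
      exact le_iSup₂ (f := fun j (_ : j ≤ n) =>
        MeasurableSpace.comap (f j) inferInstance) j hj
    exact fun s hs => hle _ ⟨s, hs, rfl⟩
  have hsup : (⨆ n, ℱ n) = (inferInstance : MeasurableSpace (ℕ → ℝ)) := by
    refine le_antisymm (iSup_le fun n => ℱ.le n) ?_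
    show (⨆ a, MeasurableSpace.comap (fun q : ℕ → ℝ => q a) inferInstance) ≤ ⨆ n, ℱ n
    refine iSup_le fun a => le_trans ?_ (le_iSup _ a)
    rw [hℱdef]
    exact le_iSup₂ (f := fun j (_ : j ≤ a) =>
      MeasurableSpace.comap (f j) inferInstance) a le_rfl
  -- G and B sets
  set G : ℕ → Set (ℕ → ℝ) := fun n => {q | bdCocycle γ₁ γ₂ q (n + 1) x ≤ M ∧
      bdCocycle γ₁ γ₂ q (n + 1) y ≤ M} with hGdef
  have hGmeasℱ : ∀ n, MeasurableSet[ℱ n] (G n) := by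
    intro n
    have hpair : Measurable[ℱ n]
        (fun q => (bdCocycle γ₁ γ₂ q (n + 1) x, bdCocycle γ₁ γ₂ q (n + 1) y)) :=
      (bdCocycle_measurable γ₁ γ₂ (n + 1) (fun j hj => hcoordℱ j n (by omega)) x).prodMk
        (bdCocycle_measurable γ₁ γ₂ (n + 1) (fun j hj => hcoordℱ j n (by omega)) y)
    exact hpair ((Set.to_countable {p : ℕ × ℕ | p.1 ≤ M ∧ p.2 ≤ M}).measurableSet)
  set B : ℕ → Set (ℕ → ℝ) := fun n =>
    ⋂ j ∈ Finset.Ico (n + 1) (n + 1 + M), (f j) ⁻¹' (Set.Ico c 1) with hBdef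
  have hBmeas' : ∀ n, MeasurableSet[⨆ k ∈ (↑(Finset.Ico (n + 1) (n + 1 + M)) : Set ℕ),
      MeasurableSpace.comap (f k) inferInstance] (B n) := by
    intro n
    refine MeasurableSet.iInter fun j => MeasurableSet.iInter fun hj => ?_
    have h1 : MeasurableSet[MeasurableSpace.comap (f j) inferInstance]
        ((f j) ⁻¹' (Set.Ico c 1)) := ⟨Set.Ico c 1, measurableSet_Ico, rfl⟩
    have hle : MeasurableSpace.comap (f j) inferInstance ≤
        ⨆ k ∈ (↑(Finset.Ico (n + 1) (n + 1 + M)) : Set ℕ),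
          MeasurableSpace.comap (f k) inferInstance :=
      le_iSup₂ (f := fun k (_ : k ∈ (↑(Finset.Ico (n + 1) (n + 1 + M)) : Set ℕ)) =>
        MeasurableSpace.comap (f k) inferInstance) j (Finset.mem_coe.2 hj)
    exact hle _ h1
  have hBmeas : ∀ n, MeasurableSet (B n) :=
    fun n => (iSup₂_le fun k _ => (hfmeas k).measurable.comap_le) _ (hBmeas' n)
  have hGmeas : ∀ n, MeasurableSet (G n) := fun n => ℱ.le n _ (hGmeasℱ n)
  -- independence of B n from ℱ n
  have hIndepB : ∀ n, Indep (⨆ k ∈ (↑(Finset.Ico (n + 1) (n + 1 + M)) : Set ℕ),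
      MeasurableSpace.comap (f k) inferInstance) (ℱ n) P := by
    intro n
    have hdisj : Disjoint (↑(Finset.Ico (n + 1) (n + 1 + M)) : Set ℕ) {k | k ≤ n} := by
      rw [Set.disjoint_left]
      intro k hk hk'
      simp only [Finset.coe_Ico, Set.mem_Ico] at hk
      simp only [Set.mem_setOf_eq] at hk'
      omega
    exact indep_iSup_of_disjoint (fun k => (hfmeas k).measurable.comap_le) hIndep hdisj
  -- probability of B n
  have hPB : ∀ n, P (B n) = (ENNReal.ofReal (1 - c)) ^ M := by
    intro n
    have hmm := hIndep.meas_biInter (S := Finset.Ico (n + 1) (n + 1 + M))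
      (s := fun j => (f j) ⁻¹' (Set.Ico c 1))
      (fun j _ => ⟨Set.Ico c 1, measurableSet_Ico, rfl⟩)
    rw [hBdef]
    simp only []
    rw [hmm]
    have hone : ∀ j, P ((f j) ⁻¹' (Set.Ico c 1)) = ENNReal.ofReal (1 - c) := by
      intro j
      rw [show (f j) ⁻¹' (Set.Ico c 1) = (fun q : ℕ → ℝ => q j) ⁻¹' (Set.Ico c 1) from rfl,
        ← Measure.map_apply (measurable_pi_apply j) measurableSet_Ico, hUnif j,
        Measure.restrict_apply measurableSet_Ico]
      have hsub : Set.Ico c 1 ∩ Set.Icc (0 : ℝ) 1 = Set.Ico c 1 := by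
        apply Set.inter_eq_self_of_subset_left
        intro r hr
        exact ⟨le_trans hc0.le hr.1, hr.2.le⟩
      rw [hsub, Real.volume_Ico]
    rw [Finset.prod_congr rfl (fun j _ => hone j), Finset.prod_const, Nat.card_Ico]
    congr 1
    omega
  set ε : ℝ := (1 - c) ^ M with hεdef
  have hεpos : 0 < ε := pow_pos (by linarith) M
  have hPBtoReal : ∀ n, (P (B n)).toReal = ε := by
    intro n
    rw [hPB n, ENNReal.toReal_pow, ENNReal.toReal_ofReal (by linarith)]
  -- the indicator of A
  have hApi : MeasurableSet A := hAmeas _ (fun j => measurable_pi_apply j)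
  set g : (ℕ → ℝ) → ℝ := A.indicator (fun _ => 1) with hgdef
  have hgInt : Integrable g P := (integrable_const (1 : ℝ)).indicator hApi
  have hAsup : MeasurableSet[⨆ n, ℱ n] A := by rw [hsup]; exact hApi
  have hLevy := hgInt.tendsto_ae_condExp (stronglyMeasurable_const.indicator hAsup)
  -- conditional expectation bound
  have hbnd : ∀ᵐ ω ∂P, ∀ n,
      (G n).indicator (fun _ => ε) ω ≤ (P[g|ℱ n]) ω := by
    rw [ae_all_iff]
    intro n
    have hBint : Integrable ((B n).indicator (fun _ => (1 : ℝ))) P :=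
      (integrable_const (1 : ℝ)).indicator (hBmeas n)
    have h1 : P[(B n).indicator (fun _ => (1 : ℝ))|ℱ n] =ᵐ[P] fun _ => (P (B n)).toReal := by
      have hcond := condExp_indep_eq (f := (B n).indicator (fun _ => (1 : ℝ)))
        (iSup₂_le fun k _ => (hfmeas k).measurable.comap_le) (ℱ.le n)
        (stronglyMeasurable_const.indicator (hBmeas' n)) (hIndepB n)
      have hint : P[(B n).indicator (fun _ => (1 : ℝ))] = (P (B n)).toReal := by
        rw [show (fun _ : (ℕ → ℝ) => (1 : ℝ)) = (1 : (ℕ → ℝ) → ℝ) from rfl,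
          integral_indicator_one (hBmeas n)]
        rfl
      rw [hint] at hcond
      exact hcond
    have h2 : P[(G n).indicator ((B n).indicator (fun _ => (1 : ℝ)))|ℱ n] =ᵐ[P]
        (G n).indicator (P[(B n).indicator (fun _ => (1 : ℝ))|ℱ n]) :=
      condExp_indicator hBint (hGmeasℱ n)
    have h3 : (G n ∩ B n).indicator (fun _ => (1 : ℝ)) ≤ᵐ[P] g := by
      filter_upwards [hW] with ω hWω
      by_cases hmem : ω ∈ G n ∩ B n
      · have hωA : ω ∈ A := by
          obtain ⟨hG, hB⟩ := hmem
          have hBj : ∀ j, n + 1 ≤ j → j < n + 1 + M → c ≤ ω j ∧ ω j < 1 := by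
            intro j hj1 hj2
            have := Set.mem_iInter.1 (Set.mem_iInter.1 hB j) (Finset.mem_Ico.2 ⟨hj1, hj2⟩)
            exact ⟨this.1, this.2⟩
          exact main_incl hγ₁ hγ₂ hWω hodd hG.1 hG.2 hBj
        rw [Set.indicator_of_mem hmem, hgdef, Set.indicator_of_mem hωA]
      · rw [Set.indicator_of_notMem hmem]
        exact Set.indicator_nonneg (fun _ _ => zero_le_one) ω
    have h4 : P[(G n ∩ B n).indicator (fun _ => (1 : ℝ))|ℱ n] ≤ᵐ[P] P[g|ℱ n] :=
      condExp_mono ((integrable_const (1 : ℝ)).indicator ((hGmeas n).inter (hBmeas n)))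
        hgInt h3
    have h5 : (G n ∩ B n).indicator (fun _ => (1 : ℝ)) =
        (G n).indicator ((B n).indicator (fun _ => (1 : ℝ))) :=
      (Set.indicator_indicator _ _ _).symm
    rw [h5] at h4
    filter_upwards [h2, h4, h1] with ω hω2 hω4 hω1
    have : (G n).indicator (fun _ => ε) ω =
        (G n).indicator (P[(B n).indicator (fun _ => (1 : ℝ))|ℱ n]) ω := by
      by_cases hωG : ω ∈ G n
      · rw [Set.indicator_of_mem hωG, Set.indicator_of_mem hωG, hω1, hPBtoReal n]
      · rw [Set.indicator_of_notMem hωG, Set.indicator_of_notMem hωG]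
    rw [this, ← hω2]
    exact hω4
  -- final assembly
  filter_upwards [hW, hSLLN, hbnd, hLevy] with ω hWω hSL hbd hLv
  have hZω : Tendsto (fun k => ∑ i ∈ Finset.range k, (if ω i < 3⁻¹ then (1 : ℝ) else -1))
      atTop atBot := by
    apply walk_atBot
    exact hSL
  have hωA : ω ∈ A := by
    by_contra hnA
    have hg0 : g ω = 0 := Set.indicator_of_notMem hnA _
    have hεle : ε ≤ g ω := by
      by_contra hlt
      push_neg at hlt
      have hev : ∀ᶠ n in atTop, (P[g|ℱ n]) ω < ε := hLv.eventually_lt_const hlt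
      obtain ⟨n₁, hn₁⟩ := eventually_atTop.1 hev
      obtain ⟨nn, hnn, hY⟩ := recurrence (y := y) hγ₁ hγ₂ hm₀ hZω (n₁ + 1)
      obtain ⟨n, rfl⟩ : ∃ n, nn = n + 1 := ⟨nn - 1, by omega⟩
      have hEabs : |(bdCocycle γ₁ γ₂ ω (n + 1) x : ℤ) - bdCocycle γ₁ γ₂ ω (n + 1) y| ≤
          (x : ℤ) + y := by
        have h1 := cocycle_abs_le hγ₁ hγ₂ hWω x y 0 (n + 1)
        rw [Nat.zero_add] at h1
        refine le_trans h1 ?_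
        show |(x : ℤ) - (y : ℤ)| ≤ (x : ℤ) + y
        rw [abs_le]
        constructor <;> omega
      rw [abs_le] at hEabs
      have hωG : ω ∈ G n := by
        show bdCocycle γ₁ γ₂ ω (n + 1) x ≤ M ∧ bdCocycle γ₁ γ₂ ω (n + 1) y ≤ M
        constructor <;> omega
      have hcontra := hbd n
      rw [Set.indicator_of_mem hωG] at hcontra
      have := hn₁ n (by omega)
      linarith
    rw [hg0] at hεle
    linarith
  exact hωA
end

section
/- Let (θ,φ) be a random dynamical system on X = ℕ^L over a probability space (Q,𝔽,ℙ) with invertible bimeasurable ℙ-preserving θ, and let A : Q → 𝒫(X) be an invariant compact (i.e. nonempty finite) random set. Then the following are equivalent: (I) A is a weak attractor (for every finite B ⊆ X, dist(φⁿ_q(B), A_{θⁿq}) → 0 in probability); (II) A is a forward attractor (for every finite B ⊆ X, dist(φⁿ_q(B), A_{θⁿq}) → 0 ℙ-a.s.); (III) A is a forward point attractor (the a.s. convergence in (II) holds for all singletons B = {x}); (IV) A is a weak point attractor (the convergence in probability in (I) holds for all singletons B = {x}); (V) A weakly attracts random finite sets (for every random finite set K : Q → 𝒫(X), dist(φⁿ_q(K_q),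 A_{θⁿq}) → 0 in probability). -/
open MeasureTheory Filter

/-- Euclidean distance on `X = ℕ^L`. -/
noncomputable def euclDist {L : ℕ} (x y : Fin L → ℕ) : ℝ :=
  Real.sqrt (∑ i, ((x i : ℝ) - (y i : ℝ)) ^ 2)

/-- Distance from a point to a set, `dist(x,A) = inf_{a∈A} d(x,a)`. -/
noncomputable def distToSet {L : ℕ} (x : Fin L → ℕ) (A : Set (Fin L → ℕ)) : ℝ :=
  sInf (euclDist x '' A)

/-- Hausdorff semi-distance `dist(B,A) = sup_{x∈B} inf_{a∈A} d(x,a)`. -/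
noncomputable def hausSemidist {L : ℕ} (B A : Set (Fin L → ℕ)) : ℝ :=
  sSup ((fun x => distToSet x A) '' B)

section Helpers

open Set

variable {L : ℕ}

lemma euclDist_self (x : Fin L → ℕ) : euclDist x x = 0 := by simp [euclDist]

lemma euclDist_nonneg (x y : Fin L → ℕ) : 0 ≤ euclDist x y := Real.sqrt_nonneg _

lemma one_le_euclDist {x y : Fin L → ℕ} (h : x ≠ y) : 1 ≤ euclDist x y := by
  rw [euclDist, Real.one_le_sqrt]
  obtain ⟨i, hi⟩ := Function.ne_iff.mp h
  have h0 : ((x i : ℤ) - (y i : ℤ)) ≠ 0 := by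
    simpa [sub_eq_zero] using hi
  have h1 : (1:ℝ) ≤ |(x i : ℝ) - (y i : ℝ)| := by
    have := Int.one_le_abs h0
    calc (1:ℝ) ≤ ((|(x i : ℤ) - (y i : ℤ)| : ℤ) : ℝ) := by exact_mod_cast this
    _ = |(x i : ℝ) - (y i : ℝ)| := by push_cast [Int.cast_abs]; ring_nf
  have h2 : (1:ℝ) ≤ ((x i : ℝ) - (y i : ℝ))^2 := by
    rw [← sq_abs]; nlinarith
  exact le_trans h2 (Finset.single_le_sum (f := fun j => ((x j : ℝ) - (y j : ℝ))^2)
    (fun j _ => sq_nonneg _) (Finset.mem_univ i))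

lemma distToSet_nonneg (x : Fin L → ℕ) (A : Set (Fin L → ℕ)) : 0 ≤ distToSet x A :=
  Real.sInf_nonneg (by rintro y ⟨a, _, rfl⟩; exact euclDist_nonneg _ _)

lemma distToSet_eq_zero_of_mem {x : Fin L → ℕ} {A : Set (Fin L → ℕ)} (h : x ∈ A) :
    distToSet x A = 0 := by
  refine le_antisymm ?_ (distToSet_nonneg x A)
  have : distToSet x A ≤ euclDist x x :=
    csInf_le ⟨0, by rintro y ⟨a, _, rfl⟩; exact euclDist_nonneg _ _⟩ ⟨x, h, rfl⟩
  simpa [euclDist_self] using this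

lemma mem_of_distToSet_lt_one {x : Fin L → ℕ} {A : Set (Fin L → ℕ)}
    (hfin : A.Finite) (hne : A.Nonempty) (h : distToSet x A < 1) : x ∈ A := by
  have hmem : distToSet x A ∈ euclDist x '' A :=
    Set.Nonempty.csInf_mem (hne.image _) (hfin.image _)
  obtain ⟨a, ha, hd⟩ := hmem
  have : x = a := by
    by_contra hne'
    have := one_le_euclDist hne'
    rw [hd] at this; linarith
  exact this ▸ ha

lemma distToSet_dichotomy (x : Fin L → ℕ) {A : Set (Fin L → ℕ)}
    (hfin : A.Finite) (hne : A.Nonempty) : distToSet x A = 0 ∨ 1 ≤ distToSet x A := by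
  rcases lt_or_ge (distToSet x A) 1 with h | h
  · exact Or.inl (distToSet_eq_zero_of_mem (mem_of_distToSet_lt_one hfin hne h))
  · exact Or.inr h

lemma hausSemidist_empty (A : Set (Fin L → ℕ)) : hausSemidist ∅ A = 0 := by
  simp [hausSemidist, Real.sSup_empty]

lemma hausSemidist_nonneg (B A : Set (Fin L → ℕ)) : 0 ≤ hausSemidist B A :=
  Real.sSup_nonneg (by rintro y ⟨b, _, rfl⟩; exact distToSet_nonneg _ _)

lemma hausSemidist_eq_zero_of_subset {B A : Set (Fin L → ℕ)} (h : B ⊆ A) :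
    hausSemidist B A = 0 := by
  refine le_antisymm ?_ (hausSemidist_nonneg B A)
  refine Real.sSup_le ?_ le_rfl
  rintro y ⟨b, hb, rfl⟩
  exact le_of_eq (distToSet_eq_zero_of_mem (h hb))

lemma distToSet_le_hausSemidist {B A : Set (Fin L → ℕ)} (hB : B.Finite) {x : Fin L → ℕ}
    (hx : x ∈ B) : distToSet x A ≤ hausSemidist B A :=
  le_csSup ((hB.image _).bddAbove) (mem_image_of_mem _ hx)

lemma subset_of_hausSemidist_lt_one {B A : Set (Fin L → ℕ)} (hB : B.Finite)
    (hfin : A.Finite) (hne : A.Nonempty) (h : hausSemidist B A < 1) : B ⊆ A := fun _ hx =>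
  mem_of_distToSet_lt_one hfin hne (lt_of_le_of_lt (distToSet_le_hausSemidist hB hx) h)

lemma hausSemidist_dichotomy (B A : Set (Fin L → ℕ)) (hB : B.Finite)
    (hfin : A.Finite) (hne : A.Nonempty) :
    hausSemidist B A = 0 ∨ 1 ≤ hausSemidist B A := by
  rcases lt_or_ge (hausSemidist B A) 1 with h | h
  · exact Or.inl (hausSemidist_eq_zero_of_subset (subset_of_hausSemidist_lt_one hB hfin hne h))
  · exact Or.inr h

lemma hausSemidist_mono {B B' A : Set (Fin L → ℕ)} (hB' : B'.Finite) (h : B ⊆ B') :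
    hausSemidist B A ≤ hausSemidist B' A := by
  rcases B.eq_empty_or_nonempty with rfl | hne
  · rw [hausSemidist_empty]; exact hausSemidist_nonneg _ _
  · exact csSup_le_csSup ((hB'.image _).bddAbove) (hne.image _) (image_mono h)

lemma hausSemidist_singleton (y : Fin L → ℕ) (A : Set (Fin L → ℕ)) :
    hausSemidist {y} A = distToSet y A := by
  simp [hausSemidist, Set.image_singleton, csSup_singleton]

lemma tendsto_zero_iff_eventually {f : ℕ → ℝ} (hf : ∀ n, f n = 0 ∨ 1 ≤ f n) :
    Tendsto f atTop (nhds 0) ↔ ∀ᶠ n in atTop, f n = 0 := by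
  constructor
  · intro h
    have h1 : ∀ᶠ n in atTop, f n < 1 := h.eventually_lt_const one_pos
    filter_upwards [h1] with n hn
    rcases hf n with h' | h'
    · exact h'
    · linarith
  · intro h
    exact Tendsto.congr' (by filter_upwards [h] with n hn using hn.symm) tendsto_const_nhds

lemma measure_tendsto_zero_of_eventually {Q : Type*} [MeasurableSpace Q] (P : Measure Q)
    [IsFiniteMeasure P] (S : ℕ → Set Q) (hS : ∀ n, MeasurableSet (S n))
    (h : ∀ᵐ q ∂P, ∀ᶠ n in atTop, q ∉ S n) :
    Tendsto (fun n => P (S n)) atTop (nhds 0) := by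
  set T : ℕ → Set Q := fun n => ⋃ (m) (_ : n ≤ m), S m with hT
  have hTmeas : ∀ n, MeasurableSet (T n) := fun n =>
    MeasurableSet.iUnion fun m => MeasurableSet.iUnion fun _ => hS m
  have hTanti : Antitone T := fun n m hnm => by
    refine iUnion₂_subset fun k hk => subset_iUnion₂ (s := fun m _ => S m) k (hnm.trans hk)
  have hInter : P (⋂ n, T n) = 0 := by
    have hnull : P {q | ¬ ∀ᶠ n in atTop, q ∉ S n} = 0 := by
      rw [← MeasureTheory.ae_iff]; exact h
    refine measure_mono_null ?_ hnull
    intro q hq hq'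
    obtain ⟨n, hn⟩ := eventually_atTop.mp hq'
    have : q ∈ T n := Set.mem_iInter.mp hq n
    obtain ⟨m, hm⟩ := Set.mem_iUnion.mp this
    obtain ⟨hnm, hqm⟩ := Set.mem_iUnion.mp hm
    exact hn m hnm hqm
  have hlim : Tendsto (fun n => P (T n)) atTop (nhds 0) := by
    have := tendsto_measure_iInter_atTop (μ := P) (s := T)
      (fun n => (hTmeas n).nullMeasurableSet) hTanti ⟨0, measure_ne_top P _⟩
    rwa [hInter] at this
  refine tendsto_of_tendsto_of_tendsto_of_le_of_le tendsto_const_nhds hlim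
    (fun n => zero_le) (fun n => measure_mono ?_)
  exact subset_iUnion₂ (s := fun m _ => S m) n le_rfl

lemma meas_comp {Q Y : Type*} [MeasurableSpace Q] [MeasurableSpace Y] [Countable Y]
    [MeasurableSingletonClass Y] {u : Q → Y} (hu : Measurable u) {g : Y → Q → ℝ}
    (hg : ∀ y, Measurable (g y)) : Measurable fun q => g (u q) q := by
  have h1 : Measurable (fun p : Q × Y => g p.2 p.1) :=
    measurable_from_prod_countable_left fun y => hg y
  exact h1.comp (measurable_id.prodMk hu)

end Helpers

/-- Equivalent characterizations of attraction for an invariant compact (nonempty finite)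
random set `A` of a random dynamical system `(θ,φ)` on `X = ℕ^L` over a probability space,
with invertible bimeasurable measure-preserving `θ`:
(I) weak attractor ↔ (II) forward attractor ↔ (III) forward point attractor ↔
(IV) weak point attractor ↔ (V) weak attraction of all random finite sets. -/
theorem stmt9 {Q : Type*} [MeasurableSpace Q] (P : Measure Q) [IsProbabilityMeasure P]
    (L : ℕ)
    (θ θinv : Q → Q) (hθ : Measurable θ) (hθinv : Measurable θinv)
    (hleft : Function.LeftInverse θinv θ) (hright : Function.RightInverse θinv θ)
    (hpres : MeasurePreserving θ P P)
    (φ : ℕ → Q → (Fin L → ℕ) → (Fin L → ℕ))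
    (hφmeas : ∀ n : ℕ, Measurable fun p : Q × (Fin L → ℕ) => φ n p.1 p.2)
    (hφ0 : ∀ q x, φ 0 q x = x)
    (hφcoc : ∀ (n m : ℕ) (q : Q) (x : Fin L → ℕ), φ (n + m) q x = φ n (θ^[m] q) (φ m q x))
    (A : Q → Set (Fin L → ℕ))
    (hAne : ∀ q, (A q).Nonempty) (hAfin : ∀ q, (A q).Finite)
    (hAmeas : ∀ x : Fin L → ℕ, Measurable fun q => distToSet x (A q))
    (hAinv : ∀ n : ℕ, ∀ᵐ q ∂P, (φ n q) '' A q = A (θ^[n] q)) :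
    List.TFAE [
      -- (I) A is a weak attractor
      (∀ B : Set (Fin L → ℕ), B.Finite → ∀ ε : ℝ, 0 < ε →
        Tendsto (fun n : ℕ =>
          P {q | ε ≤ hausSemidist ((φ n q) '' B) (A (θ^[n] q))}) atTop (nhds 0)),
      -- (II) A is a forward attractor
      (∀ B : Set (Fin L → ℕ), B.Finite →
        ∀ᵐ q ∂P, Tendsto (fun n : ℕ =>
          hausSemidist ((φ n q) '' B) (A (θ^[n] q))) atTop (nhds 0)),
      -- (III) A is a forward point attractor
      (∀ x : Fin L → ℕ,
        ∀ᵐ q ∂P, Tendsto (fun n : ℕ =>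
          distToSet (φ n q x) (A (θ^[n] q))) atTop (nhds 0)),
      -- (IV) A is a weak point attractor
      (∀ x : Fin L → ℕ, ∀ ε : ℝ, 0 < ε →
        Tendsto (fun n : ℕ =>
          P {q | ε ≤ distToSet (φ n q x) (A (θ^[n] q))}) atTop (nhds 0)),
      -- (V) A weakly attracts random finite sets
      (∀ K : Q → Set (Fin L → ℕ), (∀ q, (K q).Nonempty) → (∀ q, (K q).Finite) →
        (∀ x : Fin L → ℕ, Measurable fun q => distToSet x (K q)) →
        ∀ ε : ℝ, 0 < ε →
        Tendsto (fun n : ℕ =>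
          P {q | ε ≤ hausSemidist ((φ n q) '' K q) (A (θ^[n] q))}) atTop (nhds 0))
    ] := by
  classical
  open Set in
  have hθn : ∀ n : ℕ, Measurable (θ^[n]) := fun n => hθ.iterate n
  have hφx : ∀ (n : ℕ) (x : Fin L → ℕ), Measurable fun q => φ n q x := fun n x =>
    (hφmeas n).comp (measurable_id.prodMk measurable_const)
  have hDmeas : ∀ (n : ℕ) (x : Fin L → ℕ),
      Measurable fun q => distToSet (φ n q x) (A (θ^[n] q)) := fun n x =>
    meas_comp (hφx n x) (fun y => (hAmeas y).comp (hθn n))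
  have hDdich : ∀ (n : ℕ) (x : Fin L → ℕ) (q : Q),
      distToSet (φ n q x) (A (θ^[n] q)) = 0 ∨ 1 ≤ distToSet (φ n q x) (A (θ^[n] q)) :=
    fun n x q => distToSet_dichotomy _ (hAfin _) (hAne _)
  have hEmeas : ∀ (n : ℕ) (x : Fin L → ℕ),
      MeasurableSet {q | distToSet (φ n q x) (A (θ^[n] q)) = 0} :=
    fun n x => (hDmeas n x) (measurableSet_singleton 0)
  have hEmpty : ∀ ε : ℝ, 0 < ε → Tendsto (fun n : ℕ =>
      P {q | ε ≤ hausSemidist ((φ n q) '' (∅ : Set (Fin L → ℕ))) (A (θ^[n] q))})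
      atTop (nhds 0) := by
    intro ε hε
    have he : ∀ n : ℕ,
        {q | ε ≤ hausSemidist ((φ n q) '' (∅ : Set (Fin L → ℕ))) (A (θ^[n] q))} = ∅ := by
      intro n; ext q
      simp only [Set.image_empty, hausSemidist_empty, Set.mem_setOf_eq,
        Set.mem_empty_iff_false, iff_false, not_le]
      exact hε
    simp only [he, measure_empty]
    exact tendsto_const_nhds
  tfae_have 1 → 4 := by
    intro h1 x ε hε
    have := h1 {x} (Set.finite_singleton x) ε hε
    simpa only [Set.image_singleton, hausSemidist_singleton] using this
  tfae_have 4 → 3 := by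
    intro h4 x
    have hG : ∀ᵐ q ∂P, ∀ (n m : ℕ),
        φ m (θ^[n] q) '' A (θ^[n] q) = A (θ^[m] (θ^[n] q)) := by
      rw [ae_all_iff]
      intro n
      rw [ae_all_iff]
      intro m
      exact (hpres.iterate n).quasiMeasurePreserving.ae (hAinv m)
    set C : ℕ → Set Q := fun n => {q | distToSet (φ n q x) (A (θ^[n] q)) = 0} with hC
    have hcompl : ∀ n : ℕ, {q | (1:ℝ) ≤ distToSet (φ n q x) (A (θ^[n] q))} = (C n)ᶜ := by
      intro n; ext q
      simp only [Set.mem_setOf_eq, Set.mem_compl_iff, hC]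
      constructor
      · intro h h0
        rw [h0] at h; linarith
      · intro h
        rcases hDdich n x q with h0 | h1
        · exact absurd h0 h
        · exact h1
    have hP : Tendsto (fun n => P ((C n)ᶜ)) atTop (nhds 0) := by
      have := h4 x 1 one_pos
      simp only [hcompl] at this
      exact this
    have hUnion : P ((⋃ n, C n)ᶜ) = 0 := by
      have hle : ∀ n, P ((⋃ n, C n)ᶜ) ≤ P ((C n)ᶜ) := fun n =>
        measure_mono (Set.compl_subset_compl.mpr (Set.subset_iUnion C n))
      exact le_antisymm (ge_of_tendsto' hP hle) zero_le
    have hae : ∀ᵐ q ∂P, q ∈ ⋃ n, C n := by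
      rw [MeasureTheory.ae_iff]
      exact hUnion
    filter_upwards [hG, hae] with q hGq hq
    obtain ⟨n, hn⟩ := Set.mem_iUnion.mp hq
    rw [tendsto_zero_iff_eventually (fun k => hDdich k x q)]
    filter_upwards [eventually_ge_atTop n] with k hk
    apply distToSet_eq_zero_of_mem
    obtain ⟨m, rfl⟩ := Nat.exists_eq_add_of_le hk
    have hc : φ (n + m) q x = φ m (θ^[n] q) (φ n q x) := by
      rw [Nat.add_comm n m]; exact hφcoc m n q x
    rw [hc]
    have hmem : φ n q x ∈ A (θ^[n] q) :=
      mem_of_distToSet_lt_one (hAfin _) (hAne _) (by rw [Set.mem_setOf_eq] at hn; rw [hn]; norm_num)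
    have himg : φ m (θ^[n] q) (φ n q x) ∈ φ m (θ^[n] q) '' A (θ^[n] q) :=
      Set.mem_image_of_mem _ hmem
    rw [hGq n m] at himg
    rwa [show n + m = m + n from Nat.add_comm n m, Function.iterate_add_apply]
  tfae_have 3 → 2 := by
    intro h3 B hB
    rcases B.eq_empty_or_nonempty with rfl | hBne
    · filter_upwards with q
      simp only [Set.image_empty, hausSemidist_empty]
      exact tendsto_const_nhds
    · have hall : ∀ᵐ q ∂P, ∀ x ∈ B,
          Tendsto (fun n => distToSet (φ n q x) (A (θ^[n] q))) atTop (nhds 0) :=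
        (ae_ball_iff hB.countable).mpr fun x _ => h3 x
      filter_upwards [hall] with q hq
      rw [tendsto_zero_iff_eventually
        (fun n => hausSemidist_dichotomy _ _ (hB.image _) (hAfin _) (hAne _))]
      have hev : ∀ x ∈ B, ∀ᶠ n in atTop, distToSet (φ n q x) (A (θ^[n] q)) = 0 := fun x hx =>
        (tendsto_zero_iff_eventually (fun n => hDdich n x q)).mp (hq x hx)
      filter_upwards [(eventually_all_finite hB).mpr hev] with n hn
      apply hausSemidist_eq_zero_of_subset
      rintro y ⟨x, hx, rfl⟩
      exact mem_of_distToSet_lt_one (hAfin _) (hAne _) (by rw [hn x hx]; norm_num)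
  tfae_have 2 → 1 := by
    intro h2 B hB ε hε
    rcases B.eq_empty_or_nonempty with rfl | hBne
    · exact hEmpty ε hε
    · set S : ℕ → Set Q := fun n =>
        ⋂ x ∈ B, {q | distToSet (φ n q x) (A (θ^[n] q)) = 0} with hS
      have hSm : ∀ n, MeasurableSet (S n)ᶜ := fun n =>
        (MeasurableSet.biInter hB.countable fun x _ => hEmeas n x).compl
      have hsub : ∀ n, {q | ε ≤ hausSemidist ((φ n q) '' B) (A (θ^[n] q))} ⊆ (S n)ᶜ := by
        intro n q hq hqS
        have hsub' : (φ n q) '' B ⊆ A (θ^[n] q) := by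
          rintro y ⟨x, hx, rfl⟩
          have h0 := Set.mem_iInter₂.mp hqS x hx
          rw [Set.mem_setOf_eq] at h0
          exact mem_of_distToSet_lt_one (hAfin _) (hAne _) (by rw [h0]; norm_num)
        have h0 := hausSemidist_eq_zero_of_subset hsub'
        rw [Set.mem_setOf_eq, h0] at hq
        linarith
      have hev : ∀ᵐ q ∂P, ∀ᶠ n in atTop, q ∉ (S n)ᶜ := by
        filter_upwards [h2 B hB] with q hq
        filter_upwards [hq.eventually_lt_const one_pos] with n hn
        rw [Set.notMem_compl_iff]
        refine Set.mem_iInter₂.mpr fun x hx => ?_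
        have hs := subset_of_hausSemidist_lt_one (hB.image _) (hAfin _) (hAne _) hn
        exact distToSet_eq_zero_of_mem (hs (Set.mem_image_of_mem _ hx))
      have hP := measure_tendsto_zero_of_eventually P _ hSm hev
      exact tendsto_of_tendsto_of_tendsto_of_le_of_le tendsto_const_nhds hP
        (fun n => zero_le) (fun n => measure_mono (hsub n))
  tfae_have 1 → 5 := by
    intro h1 K hKne hKfin hKmeas ε hε
    set Bb : ℕ → Set (Fin L → ℕ) := fun M => {x | ∀ i, x i ≤ M} with hBb
    have hBfin : ∀ M, (Bb M).Finite := by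
      intro M
      have : Bb M = Set.pi Set.univ (fun _ => Set.Iic M) := by
        ext x; simp [hBb, Set.mem_pi, Set.mem_Iic, Pi.le_def]
      rw [this]; exact Set.Finite.pi fun _ => Set.finite_Iic M
    set U : ℕ → Set Q := fun M => {q | ¬ K q ⊆ Bb M} with hU
    have key : ∀ (M : ℕ) (q : Q),
        (K q ⊆ Bb M) ↔ ∀ y, y ∉ Bb M → distToSet y (K q) ≠ 0 := by
      intro M q
      constructor
      · intro hsub y hy h0
        exact hy (hsub (mem_of_distToSet_lt_one (hKfin q) (hKne q) (by rw [h0]; norm_num)))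
      · intro h y hyK
        by_contra hy
        exact h y hy (distToSet_eq_zero_of_mem hyK)
    have hUm : ∀ M, MeasurableSet (U M) := by
      intro M
      have hrw : U M =
          (⋂ (y : Fin L → ℕ) (_ : y ∉ Bb M), {q | distToSet y (K q) ≠ 0})ᶜ := by
        ext q
        simp only [hU, Set.mem_setOf_eq, Set.mem_compl_iff, Set.mem_iInter]
        exact not_congr (key M q)
      rw [hrw]
      exact (MeasurableSet.iInter fun y => MeasurableSet.iInter fun _ =>
        ((hKmeas y) (measurableSet_singleton 0)).compl).compl
    have hUanti : Antitone U := by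
      intro M M' hMM' q hq
      simp only [hU, Set.mem_setOf_eq] at hq ⊢
      intro hsub
      exact hq (hsub.trans fun y hy i => (hy i).trans hMM')
    have hUempty : ⋂ M, U M = ∅ := by
      ext q
      simp only [Set.mem_iInter, Set.mem_empty_iff_false, iff_false, not_forall]
      set F := (hKfin q).toFinset with hF
      refine ⟨F.sup (fun x => Finset.univ.sup x), fun h => ?_⟩
      simp only [hU, Set.mem_setOf_eq] at h
      refine h fun y hy i => ?_
      calc y i ≤ Finset.univ.sup y := Finset.le_sup (Finset.mem_univ i)
      _ ≤ F.sup (fun x => Finset.univ.sup x) :=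
          Finset.le_sup (by rw [hF, Set.Finite.mem_toFinset]; exact hy)
    have hUlim : Tendsto (fun M => P (U M)) atTop (nhds 0) := by
      have := tendsto_measure_iInter_atTop (μ := P) (s := U)
        (fun M => (hUm M).nullMeasurableSet) hUanti ⟨0, measure_ne_top P _⟩
      rwa [hUempty, measure_empty] at this
    rw [ENNReal.tendsto_atTop_zero]
    intro δ hδ
    have hδ2 : (0:ENNReal) < δ / 2 := ENNReal.half_pos hδ.ne'
    obtain ⟨M, hM⟩ := (hUlim.eventually_lt_const hδ2).exists
    have hV := h1 (Bb M) (hBfin M) 1 one_pos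
    obtain ⟨N, hN⟩ := ENNReal.tendsto_atTop_zero.mp hV (δ/2) hδ2
    refine ⟨N, fun n hn => ?_⟩
    have hsub : {q | ε ≤ hausSemidist ((φ n q) '' K q) (A (θ^[n] q))} ⊆
        U M ∪ {q | 1 ≤ hausSemidist ((φ n q) '' Bb M) (A (θ^[n] q))} := by
      intro q hq
      by_cases hKB : K q ⊆ Bb M
      · right
        have hmono : hausSemidist ((φ n q) '' K q) (A (θ^[n] q)) ≤
            hausSemidist ((φ n q) '' Bb M) (A (θ^[n] q)) :=
          hausSemidist_mono ((hBfin M).image _) (Set.image_mono hKB)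
        rcases hausSemidist_dichotomy ((φ n q) '' K q) (A (θ^[n] q))
          ((hKfin q).image _) (hAfin _) (hAne _) with h0 | h1'
        · rw [Set.mem_setOf_eq, h0] at hq; linarith
        · exact Set.mem_setOf_eq ▸ le_trans h1' hmono
      · exact Or.inl hKB
    calc P {q | ε ≤ hausSemidist ((φ n q) '' K q) (A (θ^[n] q))}
        ≤ P (U M) + P {q | 1 ≤ hausSemidist ((φ n q) '' Bb M) (A (θ^[n] q))} :=
          le_trans (measure_mono hsub) (measure_union_le _ _)
      _ ≤ δ/2 + δ/2 := add_le_add hM.le (hN n hn)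
      _ = δ := ENNReal.add_halves δ
  tfae_have 5 → 1 := by
    intro h5 B hB ε hε
    rcases B.eq_empty_or_nonempty with rfl | hBne
    · exact hEmpty ε hε
    · exact h5 (fun _ => B) (fun _ => hBne) (fun _ => hB) (fun _ => measurable_const) ε hε
  tfae_finish
end
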